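/- arXiv:1711.02002 — 2 statements merged into one kernel-verified Lean document; each statement's English description precedes it below -/
import Mathlib

section
/- For n ≥ 2, let J_n = (x z_1 z_2 ⋯ z_{n+1}) + Σ_{i=1}^{n-1} (z_i, ..., z_{n+1})·(y_i) ⊂ T = K[x, y_1,...,y_{n-1}, z_1,...,z_{n+1}]. Then the Hilbert series of T/J_n equals (1 + nλ − (n−2)λ^2 + λ^3 + ⋯ + λ^{n+1}) / (1−λ)^{n+1}. -/
set_option linter.unusedSectionVars false
set_option maxHeartbeats 1000000


open MvPolynomial

/-- An element `f` of the shifted graded free module `⊕ⱼ S(-a j)` over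
`S = K[x₁,…]` is homogeneous of degree `t`. -/
def IsHomVec {K : Type} [Field K] {σ : Type} {b : ℕ} (a : Fin b → ℕ) (t : ℕ)
    (f : Fin b → MvPolynomial σ K) : Prop :=
  ∀ j, if a j ≤ t then (f j).IsHomogeneous (t - a j) else f j = 0

/-- A graded free resolution of an `S`-module `N` (for `S = K[x₁,…]`, `S`-module `N`
equipped with a notion `hom t` of homogeneous elements of degree `t`):
an exact sequence `⋯ → F₁ → F₀ → N → 0` of graded free modules
`Fᵢ = ⊕ⱼ S(-a i j)` with degree-preserving maps. -/
structure GradedFreeRes (K : Type) [Field K] (σ : Type) (N : Type) [AddCommGroup N]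
    [Module (MvPolynomial σ K) N] (hom : ℕ → Set N) where
  b : ℕ → ℕ
  a : ∀ i, Fin (b i) → ℕ
  φ : ∀ i, (Fin (b (i+1)) → MvPolynomial σ K) →ₗ[MvPolynomial σ K] (Fin (b i) → MvPolynomial σ K)
  ε : (Fin (b 0) → MvPolynomial σ K) →ₗ[MvPolynomial σ K] N
  surj : Function.Surjective ε
  exact0 : LinearMap.ker ε = LinearMap.range (φ 0)
  exact : ∀ i, LinearMap.ker (φ i) = LinearMap.range (φ (i+1))
  hdeg : ∀ i t f, IsHomVec (a (i+1)) t f → IsHomVec (a i) t (φ i f)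
  hdeg0 : ∀ t f, IsHomVec (a 0) t f → ε f ∈ hom t

/-- The Castelnuovo–Mumford regularity of a homogeneous ideal `I ⊆ S`:
the least `r` such that `I` admits a graded free resolution all of whose
shifts satisfy `a i j ≤ i + r`. -/
noncomputable def idealReg {K : Type} [Field K] {σ : Type} (I : Ideal (MvPolynomial σ K)) : ℕ :=
  sInf { r | ∃ R : GradedFreeRes K σ I (fun t => {x : I | (x : MvPolynomial σ K).IsHomogeneous t}),
    ∀ i j, R.a i j ≤ i + r }

/-- The image of the degree-`t` homogeneous part of `S` in `S/I`. -/
noncomputable def quotHom {K : Type} [Field K] {σ : Type} (I : Ideal (MvPolynomial σ K)) (t : ℕ) :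
    Submodule K (MvPolynomial σ K ⧸ I) :=
  (homogeneousSubmodule σ K t).map (Ideal.Quotient.mkₐ K I).toLinearMap

/-- The Castelnuovo–Mumford regularity of `S/I`. -/
noncomputable def quotReg {K : Type} [Field K] {σ : Type} (I : Ideal (MvPolynomial σ K)) : ℕ :=
  sInf { r | ∃ R : GradedFreeRes K σ (MvPolynomial σ K ⧸ I) (fun t => (quotHom I t : Set _)),
    ∀ i j, R.a i j ≤ i + r }

/-- The Hilbert series of `S/I`, as a formal power series over `ℤ`. -/
noncomputable def hilbSeries {K : Type} [Field K] {σ : Type} (I : Ideal (MvPolynomial σ K)) :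
    PowerSeries ℤ :=
  PowerSeries.mk fun t => (Module.finrank K (quotHom I t) : ℤ)

/-- The depth of `S/I` with respect to the irrelevant maximal ideal `(x₁,…,xₙ)`:
the maximal length of a regular sequence on `S/I` consisting of elements of
the irrelevant ideal. -/
noncomputable def quotDepth {K : Type} [Field K] {σ : Type} (I : Ideal (MvPolynomial σ K)) : ℕ :=
  sSup { k | ∃ rs : List (MvPolynomial σ K), rs.length = k ∧
    (∀ r ∈ rs, r ∈ Ideal.span (Set.range (X : σ → MvPolynomial σ K))) ∧
    RingTheory.Sequence.IsRegular (MvPolynomial σ K ⧸ I) rs }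

/-- An ideal is homogeneous if it is generated by homogeneous polynomials. -/
def IsHomogeneousIdeal {K : Type} [Field K] {σ : Type} (I : Ideal (MvPolynomial σ K)) : Prop :=
  ∃ G : Set (MvPolynomial σ K), (∀ g ∈ G, ∃ d, g.IsHomogeneous d) ∧ I = Ideal.span G

/-- An ideal is a monomial ideal if it is generated by monomials. -/
def IsMonomialIdeal {K : Type} [Field K] {σ : Type} (I : Ideal (MvPolynomial σ K)) : Prop :=
  ∃ G : Set (MvPolynomial σ K), (∀ g ∈ G, ∃ d : σ →₀ ℕ, g = monomial d 1) ∧ I = Ideal.span G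

/-- `S/I` is Cohen–Macaulay: depth equals Krull dimension. -/
def QuotIsCM {K : Type} [Field K] {σ : Type} (I : Ideal (MvPolynomial σ K)) : Prop :=
  ringKrullDim (MvPolynomial σ K ⧸ I) = (quotDepth I : WithBot (WithTop ℕ))

/-- `deg h_{S/I}(λ) = s`: the Hilbert series of `S/I` can be written as
`h(λ)/(1-λ)^d` with `d = dim S/I`, `h ∈ ℤ[λ]`, `h(1) ≠ 0` and `deg h = s`. -/
def HPolyDeg {K : Type} [Field K] {σ : Type} (I : Ideal (MvPolynomial σ K)) (s : ℕ) : Prop :=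
  ∃ (d : ℕ) (h : Polynomial ℤ), ringKrullDim (MvPolynomial σ K ⧸ I) = (d : WithBot (WithTop ℕ)) ∧
    h.eval 1 ≠ 0 ∧ hilbSeries I * (1 - PowerSeries.X) ^ d = (h : PowerSeries ℤ) ∧
    h.natDegree = s

/-- The monomial ideal `J_n = (x z₁⋯z_{n+1}) + Σ_{i=1}^{n-1} (z_i,…,z_{n+1})·(y_i)`
of `T = K[x, y₁,…,y_{n-1}, z₁,…,z_{n+1}]`, where `x = X (Sum.inl ())`,
`y_i = X (Sum.inr (Sum.inl (i-1)))` and `z_j = X (Sum.inr (Sum.inr (j-1)))`. -/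
noncomputable def Jideal (K : Type) [Field K] (n : ℕ) :
    Ideal (MvPolynomial (Unit ⊕ Fin (n-1) ⊕ Fin (n+1)) K) :=
  Ideal.span ({X (Sum.inl ()) * ∏ j : Fin (n+1), X (Sum.inr (Sum.inr j))} ∪
    {p | ∃ (i : Fin (n-1)) (j : Fin (n+1)), i.1 ≤ j.1 ∧
      p = X (Sum.inr (Sum.inl i)) * X (Sum.inr (Sum.inr j))})



section Generic
variable {K : Type} [Field K] {σ : Type} [Fintype σ] [DecidableEq σ]

lemma aux_support_subset_of_mem_span {s : Set (σ →₀ ℕ)} {p : MvPolynomial σ K}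
    (hp : p ∈ Submodule.span K ((fun m => (monomial m (1 : K))) '' s)) :
    ↑p.support ⊆ s := by
  induction hp using Submodule.span_induction with
  | mem x hx =>
    obtain ⟨m, hm, rfl⟩ := hx
    intro a ha
    classical
    rw [Finset.mem_coe, MvPolynomial.support_monomial] at ha
    rw [if_neg (one_ne_zero : (1:K) ≠ 0), Finset.mem_singleton] at ha
    exact ha ▸ hm
  | zero => simp
  | add x y _ _ hx hy =>
    intro a ha
    rcases Finset.mem_union.mp (MvPolynomial.support_add (Finset.mem_coe.mp ha)) with h | h
    · exact hx h
    · exact hy h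
  | smul c x _ hx =>
    intro a ha
    exact hx (MvPolynomial.support_smul (Finset.mem_coe.mp ha))

lemma aux_mem_support_monomial {K : Type} [Field K] {σ : Type} {a m : σ →₀ ℕ}
    (h : a ∈ (monomial m (1:K)).support) : a = m := by
  classical
  simpa [MvPolynomial.support_monomial] using h

theorem aux_finrank_quotHom (G : Set (σ →₀ ℕ)) (t : ℕ) (good : Finset (σ →₀ ℕ))
    (hgood : ∀ m, m ∈ good ↔ m.degree = t ∧ ∀ g ∈ G, ¬ g ≤ m) :
    Module.finrank K (quotHom (Ideal.span ((fun m => (monomial m (1 : K))) '' G)) t)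
      = good.card := by
  classical
  set I : Ideal (MvPolynomial σ K) := Ideal.span ((fun m => (monomial m (1 : K))) '' G) with hI
  set π := (Ideal.Quotient.mkₐ K I).toLinearMap with hπ
  set v : {m // m ∈ good} → (MvPolynomial σ K ⧸ I) :=
    fun m => π (monomial (m : σ →₀ ℕ) (1 : K)) with hv
  have hrange : Set.range (fun m : {m // m ∈ good} => (monomial (m : σ →₀ ℕ) (1 : K)))
      = (fun m => monomial m (1:K)) '' (↑good : Set (σ →₀ ℕ)) := by
    ext q; constructor
    · rintro ⟨m, rfl⟩; exact ⟨m, m.2, rfl⟩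
    · rintro ⟨m, hm, rfl⟩; exact ⟨⟨m, hm⟩, rfl⟩
  have hli : LinearIndependent K v := by
    have h1 : LinearIndependent K (fun m : {m // m ∈ good} => (monomial (m : σ →₀ ℕ) (1 : K))) := by
      have h0 := (basisMonomials σ K).linearIndependent.comp
        (Subtype.val : {m // m ∈ good} → (σ →₀ ℕ)) Subtype.val_injective
      convert h0 using 1
      · rfl
      · rfl
      · ext m; simp [coe_basisMonomials]
    have hdisj : Disjoint (Submodule.span K (Set.range
        (fun m : {m // m ∈ good} => (monomial (m : σ →₀ ℕ) (1 : K))))) (LinearMap.ker π) := by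
      rw [Submodule.disjoint_def]
      intro p hp hker
      have hsupp : ↑p.support ⊆ (↑good : Set (σ →₀ ℕ)) := by
        rw [hrange] at hp
        exact aux_support_subset_of_mem_span hp
      have hpI : p ∈ I := by
        have h2 := LinearMap.mem_ker.mp hker
        rw [hπ, AlgHom.toLinearMap_apply, Ideal.Quotient.mkₐ_eq_mk] at h2
        exact Ideal.Quotient.eq_zero_iff_mem.mp h2
      have hbad := mem_ideal_span_monomial_image.mp (hI ▸ hpI)
      rw [← MvPolynomial.support_eq_empty]
      by_contra hne
      obtain ⟨m, hm⟩ := Finset.nonempty_iff_ne_empty.mpr hne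
      obtain ⟨g, hg, hle⟩ := hbad m hm
      exact ((hgood m).mp (hsupp hm)).2 g hg hle
    have := h1.map hdisj
    exact this
  have hspan : quotHom I t = Submodule.span K (Set.range v) := by
    apply le_antisymm
    · rintro q hq
      obtain ⟨p, hp, rfl⟩ := hq
      have hsupp : ↑p.support ⊆ {d : σ →₀ ℕ | d.degree = t} := by
        rw [homogeneousSubmodule_eq_finsupp_supported] at hp
        exact AddMonoidAlgebra.mem_supported.mp hp
      rw [show p = ∑ m ∈ p.support, (p.coeff m) • monomial m (1:K) by
        simpa [MvPolynomial.smul_monomial] using MvPolynomial.as_sum p]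
      rw [map_sum]
      apply Submodule.sum_mem
      intro m hm
      rw [map_smul]
      apply Submodule.smul_mem
      by_cases hmg : m ∈ good
      · exact Submodule.subset_span ⟨⟨m, hmg⟩, rfl⟩
      · have hdeg : m.degree = t := hsupp hm
        have : ∃ g ∈ G, g ≤ m := by
          by_contra hc
          push_neg at hc
          exact hmg ((hgood m).mpr ⟨hdeg, fun g hg => hc g hg⟩)
        obtain ⟨g, hg, hle⟩ := this
        have hmem : monomial m (1:K) ∈ I := by
          rw [hI]
          exact mem_ideal_span_monomial_image.mpr (by
            intro xi hxi
            exact ⟨g, hg, (aux_mem_support_monomial hxi) ▸ hle⟩)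
        have : π (monomial m (1:K)) = 0 := by
          rw [hπ, AlgHom.toLinearMap_apply, Ideal.Quotient.mkₐ_eq_mk]
          exact Ideal.Quotient.eq_zero_iff_mem.mpr hmem
        rw [this]; exact Submodule.zero_mem _
    · rw [Submodule.span_le]
      rintro q ⟨m, rfl⟩
      refine Submodule.mem_map_of_mem ?_
      rw [homogeneousSubmodule_eq_finsupp_supported, AddMonoidAlgebra.mem_supported]
      intro a ha
      rw [Finset.mem_coe] at ha
      have := aux_mem_support_monomial ha
      subst this
      exact ((hgood _).mp m.2).1
  rw [hspan, finrank_span_eq_card hli, Fintype.card_coe]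

end Generic

section Counting
variable {σ : Type} [Fintype σ] [DecidableEq σ]

lemma aux_degree_eq_sum_univ (m : σ →₀ ℕ) : m.degree = ∑ a : σ, m a :=
  Finset.sum_subset (Finset.subset_univ _) (fun _ _ ha => Finsupp.notMem_support_iff.mp ha)

lemma aux_degree_add (a b : σ →₀ ℕ) : (a + b).degree = a.degree + b.degree := by
  simp [aux_degree_eq_sum_univ, Finset.sum_add_distrib]

lemma aux_degree_single (i : σ) (k : ℕ) : (Finsupp.single i k).degree = k := by
  simp [aux_degree_eq_sum_univ, Finsupp.single_apply]

lemma aux_degree_mono {a b : σ →₀ ℕ} (h : a ≤ b) : a.degree ≤ b.degree := by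
  rw [aux_degree_eq_sum_univ, aux_degree_eq_sum_univ]
  exact Finset.sum_le_sum fun i _ => Finsupp.le_def.mp h i

lemma aux_mem_antidiag {V : Finset σ} {t : ℕ} {m : σ →₀ ℕ} :
    m ∈ V.finsuppAntidiag t ↔ m.degree = t ∧ m.support ⊆ V := by
  rw [Finset.mem_finsuppAntidiag]
  constructor
  · rintro ⟨hs, hsupp⟩
    refine ⟨?_, hsupp⟩
    rw [Finsupp.degree_apply, Finset.sum_subset hsupp (fun x _ hx => Finsupp.notMem_support_iff.mp hx)]
    exact hs
  · rintro ⟨hdeg, hsupp⟩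
    refine ⟨?_, hsupp⟩
    rw [← Finset.sum_subset hsupp (fun x _ hx => Finsupp.notMem_support_iff.mp hx)]
    exact hdeg

lemma aux_card_antidiag (V : Finset σ) (t : ℕ) :
    (V.finsuppAntidiag t).card = (V.card + t - 1).choose t := by
  classical
  rw [← Fintype.card_coe]
  have e1 : {m // m ∈ V.finsuppAntidiag t}
      ≃ {p : {f : σ →₀ ℕ // ↑f.support ⊆ (↑V : Set σ)} // (p : σ →₀ ℕ).degree = t} :=
    Equiv.mk
      (fun m => ⟨⟨m.1, fun a ha => (aux_mem_antidiag.mp m.2).2 ha⟩, (aux_mem_antidiag.mp m.2).1⟩)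
      (fun p => ⟨p.1.1, aux_mem_antidiag.mpr ⟨p.2, fun a ha => p.1.2 ha⟩⟩)
      (fun m => rfl) (fun p => rfl)
  have hdeg : ∀ f : {f : σ →₀ ℕ // ↑f.support ⊆ (↑V : Set σ)},
      (f : σ →₀ ℕ).degree = t ↔ (Finsupp.restrictSupportEquiv (↑V : Set σ) ℕ f).degree = t := by
    intro f
    have : (Finsupp.restrictSupportEquiv (↑V : Set σ) ℕ f).degree = (f : σ →₀ ℕ).degree := by
      show (Finsupp.subtypeDomain _ f.1).degree = f.1.degree
      have h1 : ((Finsupp.subtypeDomain (fun x => x ∈ (↑V : Set σ)) f.1).sum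
            fun (a : ((↑V : Set σ) : Type)) (b : ℕ) => (fun (_ : σ) (x : ℕ) => x) ↑a b)
          = f.1.sum (fun (_ : σ) (x : ℕ) => x) :=
        Finsupp.sum_subtypeDomain_index (h := fun (_ : σ) (x : ℕ) => x) (fun a ha => f.2 ha)
      exact h1
    rw [this]
  have e2 : {p : {f : σ →₀ ℕ // ↑f.support ⊆ (↑V : Set σ)} // (p : σ →₀ ℕ).degree = t}
      ≃ {g : ((↑V : Set σ) →₀ ℕ) // g.degree = t} :=
    Equiv.subtypeEquiv (Finsupp.restrictSupportEquiv (↑V : Set σ) ℕ) hdeg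
  have hcard : ∀ g : ((↑V : Set σ) →₀ ℕ),
      g.degree = t ↔ Multiset.card (Multiset.toFinsupp.toEquiv.symm g) = t := by
    intro g
    have : (Multiset.toFinsupp.toEquiv.symm g : Multiset _) = Finsupp.toMultiset g := rfl
    rw [this, Finsupp.card_toMultiset]
    rw [Finsupp.degree, Finsupp.sum]
    rfl
  have e3 : {g : ((↑V : Set σ) →₀ ℕ) // g.degree = t}
      ≃ {s : Multiset ((↑V : Set σ) : Type) // Multiset.card s = t} :=
    Equiv.subtypeEquiv Multiset.toFinsupp.toEquiv.symm hcard
  have e4 : {s : Multiset ((↑V : Set σ) : Type) // Multiset.card s = t}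
      ≃ Sym ((↑V : Set σ) : Type) t := Equiv.refl _
  have hc := Fintype.card_congr (((e1.trans e2).trans e3).trans e4)
  rw [hc, Sym.card_sym_eq_choose]
  congr 2
  · simp


lemma aux_card_shift (V : Finset σ) (g : σ →₀ ℕ) (hg : g.support ⊆ V) (t : ℕ) :
    ((V.finsuppAntidiag (g.degree + t)).filter (fun m => g ≤ m)).card
      = (V.finsuppAntidiag t).card := by
  classical
  apply Finset.card_bij' (i := fun m _ => m - g) (j := fun m _ => m + g)
  · intro m hm
    rw [Finset.mem_filter] at hm
    obtain ⟨hm, hle⟩ := hm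
    rw [aux_mem_antidiag] at hm ⊢
    constructor
    · have h1 : (m - g) + g = m := tsub_add_cancel_of_le hle
      have := congrArg Finsupp.degree h1
      rw [aux_degree_add] at this
      omega
    · exact fun a ha => hm.2 (Finsupp.support_tsub ha)
  · intro m hm
    rw [aux_mem_antidiag] at hm
    rw [Finset.mem_filter, aux_mem_antidiag]
    have hle2 : g ≤ m + g := by
      rw [Finsupp.le_def]; intro a; rw [Finsupp.add_apply]; omega
    refine ⟨⟨?_, ?_⟩, hle2⟩
    · rw [aux_degree_add, hm.1]; ring
    · exact fun a ha => (Finset.mem_union.mp (Finsupp.support_add ha)).elim (fun h => hm.2 h) (fun h => hg h)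
  · intro m hm
    rw [Finset.mem_filter] at hm
    exact tsub_add_cancel_of_le hm.2
  · intro m _
    ext a
    rw [Finsupp.tsub_apply, Finsupp.add_apply]
    omega
  
lemma aux_filter_le_empty (V : Finset σ) (g : σ →₀ ℕ) {t : ℕ} (h : t < g.degree) :
    ((V.finsuppAntidiag t).filter (fun m => g ≤ m)) = ∅ := by
  classical
  rw [Finset.filter_eq_empty_iff]
  intro m hm hle
  have := aux_degree_mono hle
  rw [(aux_mem_antidiag.mp hm).1] at this
  omega

lemma aux_degree_sum {ι : Type*} (s : Finset ι) (f : ι → (σ →₀ ℕ)) :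
    (∑ i ∈ s, f i).degree = ∑ i ∈ s, (f i).degree := by
  simp only [aux_degree_eq_sum_univ, Finsupp.finset_sum_apply]
  exact Finset.sum_comm
lemma aux_le_pair {a b : σ} (hab : a ≠ b) (m : σ →₀ ℕ) :
    (Finsupp.single a 1 + Finsupp.single b 1) ≤ m ↔ 1 ≤ m a ∧ 1 ≤ m b := by
  rw [Finsupp.le_def]
  constructor
  · intro h
    refine ⟨?_, ?_⟩
    · have := h a
      rw [Finsupp.add_apply, Finsupp.single_apply, Finsupp.single_apply,
        if_pos rfl, if_neg (Ne.symm hab)] at this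
      omega
    · have := h b
      rw [Finsupp.add_apply, Finsupp.single_apply, Finsupp.single_apply,
        if_neg hab, if_pos rfl] at this
      omega
  · rintro ⟨h1, h2⟩ c
    rw [Finsupp.add_apply, Finsupp.single_apply, Finsupp.single_apply]
    by_cases h : a = c
    · subst h
      rw [if_pos rfl, if_neg (Ne.symm hab)]
      omega
    · rw [if_neg h]
      by_cases h' : b = c
      · subst h'
        rw [if_pos rfl]
        omega
      · rw [if_neg h']
        omega
end Counting

section Specific
variable (n : ℕ)

abbrev σn := Unit ⊕ Fin (n - 1) ⊕ Fin (n + 1)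

abbrev vx : σn n := Sum.inl ()
abbrev vy (i : Fin (n - 1)) : σn n := Sum.inr (Sum.inl i)
abbrev vz (j : Fin (n + 1)) : σn n := Sum.inr (Sum.inr j)

noncomputable def zsum : σn n →₀ ℕ := ∑ j : Fin (n + 1), Finsupp.single (vz n j) 1

noncomputable def g0 : σn n →₀ ℕ := Finsupp.single (vx n) 1 + zsum n

noncomputable def gyz (i : Fin (n - 1)) (j : Fin (n + 1)) : σn n →₀ ℕ :=
  Finsupp.single (vy n i) 1 + Finsupp.single (vz n j) 1

def Gset : Set (σn n →₀ ℕ) :=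
  {g0 n} ∪ {p | ∃ (i : Fin (n-1)) (j : Fin (n+1)), i.1 ≤ j.1 ∧ p = gyz n i j}

variable {n}

@[simp] lemma zsum_x : zsum n (vx n) = 0 := by
  simp [zsum, Finsupp.finset_sum_apply, Finsupp.single_apply]
@[simp] lemma zsum_y (i : Fin (n-1)) : zsum n (vy n i) = 0 := by
  simp [zsum, Finsupp.finset_sum_apply, Finsupp.single_apply]
@[simp] lemma zsum_z (j : Fin (n+1)) : zsum n (vz n j) = 1 := by
  simp [zsum, Finsupp.finset_sum_apply, Finsupp.single_apply]

@[simp] lemma g0_x : g0 n (vx n) = 1 := by simp [g0, Finsupp.single_apply]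
@[simp] lemma g0_y (i : Fin (n-1)) : g0 n (vy n i) = 0 := by simp [g0, Finsupp.single_apply]
@[simp] lemma g0_z (j : Fin (n+1)) : g0 n (vz n j) = 1 := by simp [g0, Finsupp.single_apply]

lemma le_g0 {m : σn n →₀ ℕ} : g0 n ≤ m ↔ 1 ≤ m (vx n) ∧ ∀ j, 1 ≤ m (vz n j) := by
  rw [Finsupp.le_def]
  constructor
  · intro h
    exact ⟨by simpa using h (vx n), fun j => by simpa using h (vz n j)⟩
  · rintro ⟨h1, h2⟩ c
    rcases c with u | i | j
    · cases u; simpa using h1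
    · simp
    · simpa using h2 j

lemma le_gyz {i : Fin (n-1)} {j : Fin (n+1)} {m : σn n →₀ ℕ} :
    gyz n i j ≤ m ↔ 1 ≤ m (vy n i) ∧ 1 ≤ m (vz n j) :=
  aux_le_pair (by simp) m

lemma g0_degree : (g0 n).degree = n + 2 := by
  rw [g0, aux_degree_add, aux_degree_single, zsum, aux_degree_sum]
  simp [aux_degree_single]
  omega

lemma gyz_single_degree (i : Fin (n-1)) : (Finsupp.single (vy n i) 1).degree = 1 :=
  aux_degree_single _ _

variable (n)

noncomputable def VA : Finset (σn n) :=
  insert (vx n) ((Finset.univ : Finset (Fin (n+1))).image (vz n))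

noncomputable def VB (i : Fin (n-1)) : Finset (σn n) :=
  insert (vx n)
    ((((Finset.univ : Finset (Fin (n-1))).filter (fun k => i ≤ k)).image (vy n)) ∪
     (((Finset.univ : Finset (Fin (n+1))).filter (fun j : Fin (n+1) => (j : ℕ) < (i : ℕ))).image (vz n)))

noncomputable def goodF (t : ℕ) : Finset (σn n →₀ ℕ) :=
  (Finset.univ.finsuppAntidiag t).filter
    (fun m => ¬ g0 n ≤ m ∧ ∀ (i : Fin (n-1)) (j : Fin (n+1)), i.1 ≤ j.1 → ¬ gyz n i j ≤ m)

noncomputable def AF (t : ℕ) : Finset (σn n →₀ ℕ) :=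
  ((VA n).finsuppAntidiag t).filter (fun m => ¬ g0 n ≤ m)

noncomputable def BF (i : Fin (n-1)) (t : ℕ) : Finset (σn n →₀ ℕ) :=
  ((VB n i).finsuppAntidiag t).filter (fun m => 1 ≤ m (vy n i))

variable {n}

lemma supp_VA {m : σn n →₀ ℕ} : m.support ⊆ VA n ↔ ∀ i, m (vy n i) = 0 := by
  constructor
  · intro h i
    by_contra hne
    have : vy n i ∈ VA n := h (Finsupp.mem_support_iff.mpr hne)
    simp [VA] at this
  · intro h c hc
    rcases c with u | i | j
    · cases u; exact Finset.mem_insert_self _ _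
    · exact absurd (h i) (Finsupp.mem_support_iff.mp hc)
    · exact Finset.mem_insert_of_mem (Finset.mem_image.mpr ⟨j, Finset.mem_univ _, rfl⟩)

lemma supp_VB {i : Fin (n-1)} {m : σn n →₀ ℕ} :
    m.support ⊆ VB n i ↔
      (∀ k, k < i → m (vy n k) = 0) ∧ (∀ j : Fin (n+1), i.1 ≤ j.1 → m (vz n j) = 0) := by
  constructor
  · intro h
    constructor
    · intro k hk
      by_contra hne
      have hm : vy n k ∈ VB n i := h (Finsupp.mem_support_iff.mpr hne)
      rcases Finset.mem_insert.mp hm with h' | h'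
      · exact absurd h' (by simp)
      · rcases Finset.mem_union.mp h' with h'' | h''
        · obtain ⟨k', hk', he⟩ := Finset.mem_image.mp h''
          have : k' = k := by simpa using he
          subst this
          exact absurd (Finset.mem_filter.mp hk').2 (not_le_of_gt hk)
        · obtain ⟨j', _, he⟩ := Finset.mem_image.mp h''
          exact absurd he (by simp)
    · intro j hj
      by_contra hne
      have hm : vz n j ∈ VB n i := h (Finsupp.mem_support_iff.mpr hne)
      rcases Finset.mem_insert.mp hm with h' | h'
      · exact absurd h' (by simp)
      · rcases Finset.mem_union.mp h' with h'' | h''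
        · obtain ⟨k', _, he⟩ := Finset.mem_image.mp h''
          exact absurd he (by simp)
        · obtain ⟨j', hj', he⟩ := Finset.mem_image.mp h''
          have : j' = j := by simpa using he
          subst this
          exact absurd (Finset.mem_filter.mp hj').2 (not_lt_of_ge hj)
  · rintro ⟨h1, h2⟩ c hc
    rcases c with u | k | j
    · cases u; exact Finset.mem_insert_self _ _
    · refine Finset.mem_insert_of_mem (Finset.mem_union_left _ (Finset.mem_image.mpr
        ⟨k, Finset.mem_filter.mpr ⟨Finset.mem_univ _, ?_⟩, rfl⟩))
      by_contra hik
      exact absurd (h1 k (lt_of_not_ge hik)) (Finsupp.mem_support_iff.mp hc)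
    · refine Finset.mem_insert_of_mem (Finset.mem_union_right _ (Finset.mem_image.mpr
        ⟨j, Finset.mem_filter.mpr ⟨Finset.mem_univ _, ?_⟩, rfl⟩))
      by_contra hij
      exact absurd (h2 j (le_of_not_gt hij)) (Finsupp.mem_support_iff.mp hc)

lemma mem_goodF {t : ℕ} {m : σn n →₀ ℕ} :
    m ∈ goodF n t ↔ m.degree = t ∧ ∀ g ∈ Gset n, ¬ g ≤ m := by
  rw [goodF, Finset.mem_filter, aux_mem_antidiag]
  constructor
  · rintro ⟨⟨hdeg, _⟩, h0, h1⟩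
    refine ⟨hdeg, ?_⟩
    rintro g (rfl | ⟨i, j, hij, rfl⟩)
    · exact h0
    · exact h1 i j hij
  · rintro ⟨hdeg, h⟩
    refine ⟨⟨hdeg, Finset.subset_univ _⟩, h _ (Or.inl rfl), fun i j hij => h _ (Or.inr ⟨i, j, hij, rfl⟩)⟩

lemma mem_AF {t : ℕ} {m : σn n →₀ ℕ} :
    m ∈ AF n t ↔ m.degree = t ∧ (∀ i, m (vy n i) = 0) ∧ ¬ g0 n ≤ m := by
  rw [AF, Finset.mem_filter, aux_mem_antidiag, and_assoc, ← supp_VA]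

lemma mem_BF {i : Fin (n-1)} {t : ℕ} {m : σn n →₀ ℕ} :
    m ∈ BF n i t ↔ m.degree = t ∧ ((∀ k, k < i → m (vy n k) = 0) ∧
      (∀ j : Fin (n+1), i.1 ≤ j.1 → m (vz n j) = 0)) ∧ 1 ≤ m (vy n i) := by
  rw [BF, Finset.mem_filter, aux_mem_antidiag, and_assoc, ← supp_VB]

lemma hn_partition (t : ℕ) :
    goodF n t = AF n t ∪ Finset.univ.biUnion (fun i => BF n i t) := by
  classical
  ext m
  rw [mem_goodF, Finset.mem_union, Finset.mem_biUnion]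
  constructor
  · rintro ⟨hdeg, hgood⟩
    have h0 : ¬ g0 n ≤ m := hgood _ (Or.inl rfl)
    have h1 : ∀ (i : Fin (n-1)) (j : Fin (n+1)), i.1 ≤ j.1 →
        ¬ (1 ≤ m (vy n i) ∧ 1 ≤ m (vz n j)) := by
      intro i j hij hc
      exact hgood _ (Or.inr ⟨i, j, hij, rfl⟩) (le_gyz.mpr hc)
    by_cases hY : ∀ i, m (vy n i) = 0
    · exact Or.inl (mem_AF.mpr ⟨hdeg, hY, h0⟩)
    · right
      push_neg at hY
      have hne : ((Finset.univ : Finset (Fin (n-1))).filter (fun i => m (vy n i) ≠ 0)).Nonempty := by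
        obtain ⟨i, hi⟩ := hY
        exact ⟨i, Finset.mem_filter.mpr ⟨Finset.mem_univ _, hi⟩⟩
      obtain ⟨i0, hi0mem, hi0min⟩ := Finset.exists_min_image _ id hne
      have hi0ne : m (vy n i0) ≠ 0 := (Finset.mem_filter.mp hi0mem).2
      refine ⟨i0, Finset.mem_univ _, mem_BF.mpr ⟨hdeg, ⟨?_, ?_⟩, by omega⟩⟩
      · intro k hk
        by_contra hkk
        have : id i0 ≤ id k := hi0min k (Finset.mem_filter.mpr ⟨Finset.mem_univ _, hkk⟩)
        exact absurd hk (not_lt_of_ge this)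
      · intro j hj
        have := h1 i0 j hj
        omega
  · rintro (hA | ⟨i, _, hB⟩)
    · obtain ⟨hdeg, hY, h0⟩ := mem_AF.mp hA
      refine ⟨hdeg, ?_⟩
      rintro g (rfl | ⟨i, j, hij, rfl⟩)
      · exact h0
      · rw [le_gyz]
        rw [hY i]
        omega
    · obtain ⟨hdeg, ⟨hYlt, hZ⟩, hyi⟩ := mem_BF.mp hB
      refine ⟨hdeg, ?_⟩
      rintro g (rfl | ⟨i', j', hij', rfl⟩)
      · rw [le_g0]
        rintro ⟨-, hz⟩
        have hlast : m (vz n ⟨n, Nat.lt_succ_self n⟩) = 0 := by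
          apply hZ
          have := i.isLt
          simp only []
          omega
        have := hz ⟨n, Nat.lt_succ_self n⟩
        omega
      · rw [le_gyz]
        rintro ⟨hy', hz'⟩
        have hii' : i ≤ i' := by
          by_contra hc
          have := hYlt i' (lt_of_not_ge hc)
          omega
        have hji : (j' : ℕ) < i.1 := by
          by_contra hc
          have := hZ j' (le_of_not_gt hc)
          omega
        have : (i : ℕ) ≤ (i' : ℕ) := hii'
        omega

lemma hn_disj1 (t : ℕ) :
    Disjoint (AF n t) (Finset.univ.biUnion (fun i => BF n i t)) := by
  rw [Finset.disjoint_left]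
  intro m hm hm'
  obtain ⟨i, -, hB⟩ := Finset.mem_biUnion.mp hm'
  have h1 := (mem_AF.mp hm).2.1 i
  have h2 := (mem_BF.mp hB).2.2
  omega

lemma hn_disj2 (t : ℕ) :
    ∀ i ∈ (Finset.univ : Finset (Fin (n-1))), ∀ i' ∈ (Finset.univ : Finset (Fin (n-1))),
      i ≠ i' → Disjoint (BF n i t) (BF n i' t) := by
  intro i _ i' _ hne
  rw [Finset.disjoint_left]
  intro m hm hm'
  obtain ⟨-, ⟨hlt, -⟩, hy⟩ := mem_BF.mp hm
  obtain ⟨-, ⟨hlt', -⟩, hy'⟩ := mem_BF.mp hm'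
  rcases lt_or_gt_of_ne hne with h | h
  · have := hlt' i h
    omega
  · have := hlt i' h
    omega

lemma card_goodF (t : ℕ) :
    (goodF n t).card = (AF n t).card + ∑ i : Fin (n-1), (BF n i t).card := by
  classical
  rw [hn_partition t, Finset.card_union_of_disjoint (hn_disj1 t), Finset.card_biUnion (hn_disj2 t)]

lemma card_VA : (VA n).card = n + 2 := by
  rw [VA, Finset.card_insert_of_notMem (by simp), Finset.card_image_of_injective _
    (fun a b h => by simpa using h)]
  simp

lemma card_VB (i : Fin (n-1)) : (VB n i).card = n := by
  classical
  rw [VB, Finset.card_insert_of_notMem (by simp), Finset.card_union_of_disjoint (by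
    rw [Finset.disjoint_left]
    intro a ha ha'
    obtain ⟨k, -, rfl⟩ := Finset.mem_image.mp ha
    obtain ⟨j, -, he⟩ := Finset.mem_image.mp ha'
    exact absurd he (by simp))]
  rw [Finset.card_image_of_injective _ (fun a b h => by simpa using h),
    Finset.card_image_of_injective _ (fun a b h => by simpa using h)]
  have h1 : ((Finset.univ : Finset (Fin (n-1))).filter (fun k => i ≤ k)) = Finset.Ici i := by
    ext k
    simp [Finset.mem_Ici]
  have h2 : ((Finset.univ : Finset (Fin (n+1))).filter (fun j : Fin (n+1) => (j : ℕ) < (i : ℕ)))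
      = Finset.Iio ⟨(i : ℕ), by omega⟩ := by
    ext j
    simp [Finset.mem_Iio, Fin.lt_def]
  rw [h1, h2, Fin.card_Ici, Fin.card_Iio]
  simp only [Fin.val_mk]
  have := i.isLt
  omega


lemma g0_supp : (g0 n).support ⊆ VA n := supp_VA.mpr (fun i => g0_y i)

lemma single_vy_supp (i : Fin (n-1)) : (Finsupp.single (vy n i) 1).support ⊆ VB n i := by
  apply supp_VB.mpr
  constructor
  · intro k hk
    rw [Finsupp.single_apply, if_neg]
    intro h
    have : i = k := by simpa using h
    omega
  · intro j _
    rw [Finsupp.single_apply, if_neg (by simp)]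

lemma card_AF_eq (t : ℕ) : ((AF n t).card : ℤ) =
    ((n+1+t).choose (n+1) : ℤ)
      - (if n+2 ≤ t then (((n+1+(t-(n+2))).choose (n+1) : ℕ) : ℤ) else 0) := by
  classical
  have hsymm : ∀ s : ℕ, (n+1+s).choose s = (n+1+s).choose (n+1) := by
    intro s
    have h := Nat.choose_symm (show n+1 ≤ n+1+s by omega)
    rw [show n+1+s-(n+1) = s by omega] at h
    exact h
  have htot : ((VA n).finsuppAntidiag t).card = (n+1+t).choose (n+1) := by
    rw [aux_card_antidiag, card_VA, show n + 2 + t - 1 = n+1+t by omega, hsymm t]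
  have hsplit := Finset.card_filter_add_card_filter_not
    (s := (VA n).finsuppAntidiag t) (p := fun m => g0 n ≤ m)
  have hAF : (AF n t) = ((VA n).finsuppAntidiag t).filter (fun m => ¬ g0 n ≤ m) := rfl
  by_cases ht : n+2 ≤ t
  · have hbad : (((VA n).finsuppAntidiag t).filter (fun m => g0 n ≤ m)).card
        = ((n+1+(t-(n+2))).choose (n+1)) := by
      have h1 : (VA n).finsuppAntidiag t = (VA n).finsuppAntidiag ((g0 n).degree + (t-(n+2))) := by
        rw [g0_degree]
        congr 1
        omega
      rw [h1, aux_card_shift _ _ g0_supp, aux_card_antidiag, card_VA,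
        show n + 2 + (t-(n+2)) - 1 = n+1+(t-(n+2)) by omega, hsymm]
    rw [if_pos ht, hAF]
    omega
  · have hbad : (((VA n).finsuppAntidiag t).filter (fun m => g0 n ≤ m)).card = 0 := by
      rw [aux_filter_le_empty _ _ (by rw [g0_degree]; omega)]
      simp
    rw [if_neg ht, hAF]
    omega

lemma card_BF_eq (hn : 2 ≤ n) (i : Fin (n-1)) (t : ℕ) : ((BF n i t).card : ℤ) =
    (if 1 ≤ t then (((n-1+(t-1)).choose (n-1) : ℕ) : ℤ) else 0) := by
  classical
  have hsymm : ∀ s : ℕ, (n-1+s).choose s = (n-1+s).choose (n-1) := by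
    intro s
    have h := Nat.choose_symm (show n-1 ≤ n-1+s by omega)
    rw [show n-1+s-(n-1) = s by omega] at h
    exact h
  have hBF : BF n i t = ((VB n i).finsuppAntidiag t).filter
      (fun m => Finsupp.single (vy n i) 1 ≤ m) := by
    rw [BF]
    apply Finset.filter_congr
    intro m _
    rw [Finsupp.single_le_iff]
  by_cases ht : 1 ≤ t
  · have h1 : (VB n i).finsuppAntidiag t
        = (VB n i).finsuppAntidiag ((Finsupp.single (vy n i) 1).degree + (t-1)) := by
      rw [aux_degree_single]
      congr 1
      omega
    rw [if_pos ht, hBF, h1, aux_card_shift _ _ (single_vy_supp i), aux_card_antidiag, card_VB,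
      show n + (t-1) - 1 = n-1+(t-1) by omega, hsymm]
  · have ht0 : t = 0 := by omega
    rw [if_neg ht, hBF, aux_filter_le_empty _ _ (by rw [aux_degree_single]; omega)]
    simp

lemma card_good_eq (hn : 2 ≤ n) (t : ℕ) : ((goodF n t).card : ℤ) =
    ((n+1+t).choose (n+1) : ℤ)
      - (if n+2 ≤ t then (((n+1+(t-(n+2))).choose (n+1) : ℕ) : ℤ) else 0)
      + ((n : ℤ) - 1) * (if 1 ≤ t then (((n-1+(t-1)).choose (n-1) : ℕ) : ℤ) else 0) := by
  have h := card_goodF (n := n) t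
  have : ((goodF n t).card : ℤ) = ((AF n t).card : ℤ) + ∑ i : Fin (n-1), ((BF n i t).card : ℤ) := by
    rw [h]
    push_cast
    ring
  rw [this, card_AF_eq]
  have hsum : ∑ i : Fin (n-1), ((BF n i t).card : ℤ)
      = ((n : ℤ) - 1) * (if 1 ≤ t then (((n-1+(t-1)).choose (n-1) : ℕ) : ℤ) else 0) := by
    rw [Finset.sum_congr rfl (fun i _ => card_BF_eq hn i t), Finset.sum_const,
      Finset.card_univ, Fintype.card_fin, nsmul_eq_mul]
    congr 1
    push_cast [Nat.cast_sub (show 1 ≤ n by omega)]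
    ring
  rw [hsum]

lemma prod_X_eq {K : Type} [Field K] {σ : Type} {ι : Type} (s : Finset ι) (f : ι → σ) :
    (∏ j ∈ s, X (f j) : MvPolynomial σ K)
      = monomial (∑ j ∈ s, Finsupp.single (f j) 1) 1 := by
  classical
  induction s using Finset.cons_induction with
  | empty => simp
  | cons a s ha ih =>
    rw [Finset.prod_cons, Finset.sum_cons, ih,
      show (X (f a) : MvPolynomial σ K) = monomial (Finsupp.single (f a) 1) 1 from rfl,
      monomial_mul, one_mul]

lemma J_eq (K : Type) [Field K] : Jideal K n
    = Ideal.span ((fun m => monomial m (1:K)) '' Gset n) := by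
  rw [Jideal, Gset, Set.image_union, Set.image_singleton]
  congr 1
  congr 1
  · rw [prod_X_eq, show (X (Sum.inl ()) : MvPolynomial (σn n) K)
      = monomial (Finsupp.single (vx n) 1) 1 from rfl, monomial_mul, one_mul]
    rfl
  · ext q
    simp only [Set.mem_setOf_eq, Set.mem_image]
    constructor
    · rintro ⟨i, j, hij, rfl⟩
      refine ⟨gyz n i j, ⟨i, j, hij, rfl⟩, ?_⟩
      rw [gyz, show (X (Sum.inr (Sum.inl i)) : MvPolynomial (σn n) K)
        = monomial (Finsupp.single (vy n i) 1) 1 from rfl,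
        show (X (Sum.inr (Sum.inr j)) : MvPolynomial (σn n) K)
        = monomial (Finsupp.single (vz n j) 1) 1 from rfl, monomial_mul, one_mul]
    · rintro ⟨m, ⟨i, j, hij, rfl⟩, rfl⟩
      refine ⟨i, j, hij, ?_⟩
      rw [gyz, show (X (Sum.inr (Sum.inl i)) : MvPolynomial (σn n) K)
        = monomial (Finsupp.single (vy n i) 1) 1 from rfl,
        show (X (Sum.inr (Sum.inr j)) : MvPolynomial (σn n) K)
        = monomial (Finsupp.single (vz n j) 1) 1 from rfl, monomial_mul, one_mul]

lemma hilb_eq (K : Type) [Field K] : hilbSeries (Jideal K n)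
    = PowerSeries.mk fun t => ((goodF n t).card : ℤ) := by
  rw [hilbSeries]
  refine congrArg PowerSeries.mk (funext fun t => ?_)
  rw [J_eq (n := n) K]
  exact_mod_cast congrArg (fun k : ℕ => (k : ℤ))
    (aux_finrank_quotHom (Gset n) t (goodF n t) (fun m => mem_goodF))


lemma mk_card_eq (hn : 2 ≤ n) : PowerSeries.mk (fun t => ((goodF n t).card : ℤ))
    = (PowerSeries.invOneSubPow ℤ (n+2)).val
      - (PowerSeries.invOneSubPow ℤ (n+2)).val * PowerSeries.X^(n+2)
      + ((n:ℤ)-1) • ((PowerSeries.invOneSubPow ℤ n).val * PowerSeries.X) := by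
  have hv1 : ((PowerSeries.invOneSubPow ℤ (n+2)).val)
      = PowerSeries.mk fun t => (((n+1+t).choose (n+1) : ℕ) : ℤ) :=
    PowerSeries.invOneSubPow_val_succ_eq_mk_add_choose ℤ (n+1)
  have hv2 : ((PowerSeries.invOneSubPow ℤ n).val)
      = PowerSeries.mk fun t => (((n-1+t).choose (n-1) : ℕ) : ℤ) := by
    have h := PowerSeries.invOneSubPow_val_succ_eq_mk_add_choose ℤ (n-1)
    rw [show n-1+1 = n by omega] at h
    exact h
  ext t
  rw [PowerSeries.coeff_mk, map_add, map_sub, hv1, hv2, PowerSeries.coeff_mk,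
    PowerSeries.coeff_mul_X_pow', map_zsmul,
    show (PowerSeries.mk fun t => (((n-1+t).choose (n-1) : ℕ) : ℤ)) * PowerSeries.X
      = (PowerSeries.mk fun t => (((n-1+t).choose (n-1) : ℕ) : ℤ)) * PowerSeries.X^1 by ring,
    PowerSeries.coeff_mul_X_pow', card_good_eq hn t, smul_eq_mul]
  by_cases h1 : n+2 ≤ t <;> by_cases h2 : 1 ≤ t <;>
    simp only [if_pos, if_neg, h1, h2, PowerSeries.coeff_mk] <;> split_ifs <;>
    first
      | ring
      | omega
      | (exfalso; omega)

lemma hilb_mul_eq (K : Type) [Field K] (hn : 2 ≤ n) :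
    hilbSeries (Jideal K n) * (1 - PowerSeries.X)^(n+2)
      = 1 - PowerSeries.X^(n+2)
        + ((n:ℤ)-1) • (PowerSeries.X * (1 - PowerSeries.X)^2) := by
  have u1 : (PowerSeries.invOneSubPow ℤ (n+2)).val * (1 - PowerSeries.X)^(n+2) = 1 := by
    rw [← PowerSeries.invOneSubPow_inv_eq_one_sub_pow]
    exact (PowerSeries.invOneSubPow ℤ (n+2)).val_inv
  have u2 : (PowerSeries.invOneSubPow ℤ n).val * (1 - PowerSeries.X)^n = 1 := by
    rw [← PowerSeries.invOneSubPow_inv_eq_one_sub_pow]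
    exact (PowerSeries.invOneSubPow ℤ n).val_inv
  have hp : (1 - PowerSeries.X : PowerSeries ℤ)^(n+2)
      = (1 - PowerSeries.X)^n * (1 - PowerSeries.X)^2 := by
    rw [← pow_add]
  rw [hilb_eq (n := n) K, mk_card_eq hn, zsmul_eq_mul, ← map_intCast (PowerSeries.C (R := ℤ)), Int.cast_id]
  set A := (PowerSeries.invOneSubPow ℤ (n+2)).val
  set B := (PowerSeries.invOneSubPow ℤ n).val
  calc (A - A * PowerSeries.X^(n+2) + PowerSeries.C ((n:ℤ)-1) * (B * PowerSeries.X))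
        * (1 - PowerSeries.X)^(n+2)
      = (A * (1 - PowerSeries.X)^(n+2))
        - (A * (1 - PowerSeries.X)^(n+2)) * PowerSeries.X^(n+2)
        + PowerSeries.C ((n:ℤ)-1) * (PowerSeries.X * (1 - PowerSeries.X)^2)
          * (B * (1 - PowerSeries.X)^n) := by
        rw [hp]; ring
    _ = 1 - PowerSeries.X^(n+2)
        + PowerSeries.C ((n:ℤ)-1) * (PowerSeries.X * (1 - PowerSeries.X)^2) := by
        rw [u1, u2]; ring
    _ = _ := by rw [zsmul_eq_mul, ← map_intCast (PowerSeries.C (R := ℤ)), Int.cast_id]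

lemma telescope_sum (m : ℕ) (hm : 2 ≤ m) :
    (∑ i ∈ Finset.Icc 3 (m+1), (PowerSeries.X : PowerSeries ℤ)^i) * (1 - PowerSeries.X)
      = PowerSeries.X^3 - PowerSeries.X^(m+2) := by
  induction m with
  | zero => omega
  | succ k ih =>
    rcases Nat.lt_or_ge k 2 with h | h
    · have hk : k = 1 := by omega
      subst hk
      norm_num [Finset.Icc_self]
      ring
    · have ihh := ih h
      rw [Finset.sum_Icc_succ_top (by omega), add_mul, ihh]
      ring


end Specific


/-- the Hilbert series of `T/J_n` equals
`(1 + nλ - (n-2)λ² + λ³ + ⋯ + λ^{n+1})/(1-λ)^{n+1}` for `n ≥ 2`. -/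
theorem stmt9 (K : Type) [Field K] (n : ℕ) (hn : 2 ≤ n) :
    hilbSeries (Jideal K n) * (1 - PowerSeries.X) ^ (n + 1) =
      1 + PowerSeries.C (n : ℤ) * PowerSeries.X
        - PowerSeries.C ((n : ℤ) - 2) * PowerSeries.X ^ 2
        + ∑ i ∈ Finset.Icc 3 (n + 1), PowerSeries.X ^ i := by
  have key := hilb_mul_eq (n := n) K hn
  have htel := telescope_sum n hn
  have hne : (1 - PowerSeries.X : PowerSeries ℤ) ≠ 0 := by
    intro h
    have := congrArg (PowerSeries.coeff 0) h
    simp at this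
  apply mul_right_cancel₀ hne
  calc hilbSeries (Jideal K n) * (1 - PowerSeries.X)^(n+1) * (1 - PowerSeries.X)
      = hilbSeries (Jideal K n) * (1 - PowerSeries.X)^(n+2) := by
        rw [mul_assoc, ← pow_succ]
    _ = 1 - PowerSeries.X^(n+2)
        + ((n:ℤ)-1) • (PowerSeries.X * (1 - PowerSeries.X)^2) := key
    _ = (1 + PowerSeries.C (n : ℤ) * PowerSeries.X
        - PowerSeries.C ((n : ℤ) - 2) * PowerSeries.X ^ 2
        + ∑ i ∈ Finset.Icc 3 (n + 1), PowerSeries.X ^ i) * (1 - PowerSeries.X) := by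
        rw [add_mul, sub_mul, add_mul, one_mul, htel, zsmul_eq_mul, ← map_intCast (PowerSeries.C (R := ℤ)), Int.cast_id]
        simp only [map_sub, map_one, map_ofNat]
        ring
end

section
/- Let S_1 = K[x, y_1, z_1, z_2] and I_1 = (x y_1, x z_1 z_2, y_1 z_1, y_1 z_2). Then reg(S_1/I_1) = 2 and the Hilbert series of S_1/I_1 equals (1 + 2λ)/(1−λ)^2. -/
open MvPolynomial

namespace Stmt14

variable {K : Type} [Field K]

noncomputable def Ide (K : Type) [Field K] : Ideal (MvPolynomial (Fin 4) K) :=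
  Ideal.span {X 0 * X 1, X 0 * X 2 * X 3, X 1 * X 2, X 1 * X 3}

noncomputable def E1 : Fin 4 →₀ ℕ := Finsupp.single 0 1 + Finsupp.single 1 1
noncomputable def E2 : Fin 4 →₀ ℕ := Finsupp.single 0 1 + Finsupp.single 2 1 + Finsupp.single 3 1
noncomputable def E3 : Fin 4 →₀ ℕ := Finsupp.single 1 1 + Finsupp.single 2 1
noncomputable def E4 : Fin 4 →₀ ℕ := Finsupp.single 1 1 + Finsupp.single 3 1

@[simp] lemma E1_apply (i : Fin 4) : E1 i = if i = 0 ∨ i = 1 then 1 else 0 := by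
  fin_cases i <;> simp [E1, Finsupp.single_apply]
@[simp] lemma E2_apply (i : Fin 4) : E2 i = if i = 1 then 0 else 1 := by
  fin_cases i <;> simp [E2, Finsupp.single_apply]
@[simp] lemma E3_apply (i : Fin 4) : E3 i = if i = 1 ∨ i = 2 then 1 else 0 := by
  fin_cases i <;> simp [E3, Finsupp.single_apply]
@[simp] lemma E4_apply (i : Fin 4) : E4 i = if i = 1 ∨ i = 3 then 1 else 0 := by
  fin_cases i <;> simp [E4, Finsupp.single_apply]

lemma hm1 : (X 0 * X 1 : MvPolynomial (Fin 4) K) = monomial E1 1 := by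
  rw [E1, X, X, monomial_mul, one_mul]
lemma hm2 : (X 0 * X 2 * X 3 : MvPolynomial (Fin 4) K) = monomial E2 1 := by
  rw [E2, X, X, X, monomial_mul, monomial_mul, one_mul, one_mul]
lemma hm3 : (X 1 * X 2 : MvPolynomial (Fin 4) K) = monomial E3 1 := by
  rw [E3, X, X, monomial_mul, one_mul]
lemma hm4 : (X 1 * X 3 : MvPolynomial (Fin 4) K) = monomial E4 1 := by
  rw [E4, X, X, monomial_mul, one_mul]

lemma le_iff4 {d e : Fin 4 →₀ ℕ} : d ≤ e ↔ d 0 ≤ e 0 ∧ d 1 ≤ e 1 ∧ d 2 ≤ e 2 ∧ d 3 ≤ e 3 := by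
  rw [Finsupp.le_def]
  refine ⟨fun h => ⟨h 0, h 1, h 2, h 3⟩, fun h i => ?_⟩
  fin_cases i <;> simp [h.1, h.2.1, h.2.2.1, h.2.2.2]

lemma degE (d : Fin 4 →₀ ℕ) : d.degree = d 0 + d 1 + d 2 + d 3 := by
  rw [Finsupp.degree_apply, Finset.sum_subset (Finset.subset_univ d.support)
    (fun x _ hx => Finsupp.notMem_support_iff.mp hx), Fin.sum_univ_four]

lemma mem_I_iff {f : MvPolynomial (Fin 4) K} :
    f ∈ Ide K ↔ ∀ d ∈ f.support, E1 ≤ d ∨ E2 ≤ d ∨ E3 ≤ d ∨ E4 ≤ d := by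
  have : Ide K = Ideal.span ((fun s => monomial s (1:K)) '' {E1, E2, E3, E4}) := by
    rw [Ide, Set.image_insert_eq, Set.image_insert_eq, Set.image_insert_eq, Set.image_singleton,
      hm1, hm2, hm3, hm4]
  rw [this, mem_ideal_span_monomial_image]
  simp only [Set.mem_insert_iff, Set.mem_singleton_iff]
  constructor
  · intro h d hd
    obtain ⟨s, hs, hsd⟩ := h d hd
    rcases hs with rfl | rfl | rfl | rfl
    exacts [Or.inl hsd, Or.inr (Or.inl hsd), Or.inr (Or.inr (Or.inl hsd)),
      Or.inr (Or.inr (Or.inr hsd))]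
  · intro h d hd
    rcases h d hd with h' | h' | h' | h'
    exacts [⟨E1, Or.inl rfl, h'⟩, ⟨E2, Or.inr (Or.inl rfl), h'⟩,
      ⟨E3, Or.inr (Or.inr (Or.inl rfl)), h'⟩, ⟨E4, Or.inr (Or.inr (Or.inr rfl)), h'⟩]

lemma supp_deg {v : MvPolynomial (Fin 4) K} {n : ℕ} (hv : v.IsHomogeneous n)
    {d : Fin 4 →₀ ℕ} (hd : d ∈ v.support) : d.degree = n := by
  have := hv (mem_support_iff.mp hd)
  rw [Finsupp.degree_eq_weight_one]; exact this

lemma ylem {v : MvPolynomial (Fin 4) K} {n : ℕ} (hv : v ∈ Ide K)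
    (hh : v.IsHomogeneous n) (hn : n ≤ 2) : X 1 ∣ v := by
  have hX : (X 1 : MvPolynomial (Fin 4) K) = monomial (Finsupp.single 1 1) 1 := rfl
  rw [← Ideal.mem_span_singleton, hX, ← Set.image_singleton (f := fun s => monomial s (1:K)),
    mem_ideal_span_monomial_image]
  intro d hd
  refine ⟨Finsupp.single 1 1, rfl, ?_⟩
  have hdeg : d.degree = n := supp_deg hh hd
  rw [degE] at hdeg
  have h1 : 1 ≤ d 1 := by
    rcases mem_I_iff.mp hv d hd with h' | h' | h' | h'
    · have := (le_iff4.mp h').2.1; simpa using this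
    · exfalso
      obtain ⟨a, b, c, e⟩ := le_iff4.mp h'
      have a' : 1 ≤ d 0 := by simpa using a
      have c' : 1 ≤ d 2 := by simpa using c
      have e' : 1 ≤ d 3 := by simpa using e
      omega
    · have := (le_iff4.mp h').2.1; simpa using this
    · have := (le_iff4.mp h').2.1; simpa using this
  rwa [Finsupp.single_le_iff]

lemma isHomVec_single {σ : Type} {b : ℕ} (a : Fin b → ℕ) (j : Fin b) :
    IsHomVec a (a j) (Pi.single j (1 : MvPolynomial σ K)) := by
  intro j'
  by_cases h : j' = j
  · subst h
    simp only [Pi.single_eq_same, le_refl, if_true, Nat.sub_self]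
    exact isHomogeneous_one _ _
  · rw [Pi.single_eq_of_ne h]
    split
    · exact isHomogeneous_zero _ _ _
    · rfl

lemma lam_hom {σ : Type} {b : ℕ} {a : Fin b → ℕ} {p : Fin b → MvPolynomial σ K}
    (hp : ∀ j, (p j).IsHomogeneous (a j)) {t : ℕ} {f : Fin b → MvPolynomial σ K}
    (hf : IsHomVec a t f) : (∑ j, f j * p j).IsHomogeneous t := by
  apply IsHomogeneous.sum
  intro j _
  have := hf j
  split at this
  · have := this.mul (hp j)
    rwa [Nat.sub_add_cancel (by assumption)] at this
  · rw [this, zero_mul]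
    exact isHomogeneous_zero _ _ _

lemma pi_sum {R : Type*} [CommRing R] {n : ℕ} (f : Fin n → R) :
    f = ∑ j, f j • (Pi.single j (1 : R) : Fin n → R) := by
  funext k
  rw [Finset.sum_apply]
  simp [Pi.single_apply, Finset.sum_ite_eq]

lemma m2_mem : (X 0 * X 2 * X 3 : MvPolynomial (Fin 4) K) ∈ Ide K := by
  apply Ideal.subset_span; simp

lemma coeff_zero_of_mem {w : MvPolynomial (Fin 4) K} (hw : w ∈ Ide K) : coeff 0 w = 0 := by
  by_contra h
  rcases mem_I_iff.mp hw 0 (mem_support_iff.mpr h) with h' | h' | h' | h' <;>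
    · obtain ⟨a, b, c, e⟩ := le_iff4.mp h'
      simp at a b c e

lemma smul_mk {I : Ideal (MvPolynomial (Fin 4) K)} (r x : MvPolynomial (Fin 4) K) :
    r • (Ideal.Quotient.mk I x) = Ideal.Quotient.mk I (r * x) := by
  rw [← Ideal.Quotient.mk_eq_mk, ← Ideal.Quotient.mk_eq_mk, ← Submodule.Quotient.mk_smul,
    smul_eq_mul]

lemma lower_bound {r : ℕ} (hr : r ≤ 1)
    (R : GradedFreeRes K (Fin 4) (MvPolynomial (Fin 4) K ⧸ Ide K)
      (fun t => (quotHom (Ide K) t : Set _)))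
    (hR : ∀ i j, R.a i j ≤ i + r) : False := by
  classical
  have hrep : ∀ j : Fin (R.b 0), ∃ pj : MvPolynomial (Fin 4) K,
      pj.IsHomogeneous (R.a 0 j) ∧ Ideal.Quotient.mk (Ide K) pj = R.ε (Pi.single j 1) := by
    intro j
    obtain ⟨x, hx, hx2⟩ := R.hdeg0 (R.a 0 j) (Pi.single j 1) (isHomVec_single _ _)
    exact ⟨x, hx, hx2⟩
  choose p hp1 hp2 using hrep
  set lam : (Fin (R.b 0) → MvPolynomial (Fin 4) K) → MvPolynomial (Fin 4) K :=
    fun f => ∑ j, f j * p j with hlam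
  have lam_smul : ∀ (c : MvPolynomial (Fin 4) K) v, lam (c • v) = c * lam v := by
    intro c v
    simp only [hlam, Pi.smul_apply, smul_eq_mul, Finset.mul_sum, mul_assoc]
  have lam_sum : ∀ {ι : Type} (s : Finset ι) (w : ι → (Fin (R.b 0) → MvPolynomial (Fin 4) K)),
      lam (∑ i ∈ s, w i) = ∑ i ∈ s, lam (w i) := by
    intro ι s w
    simp only [hlam, Finset.sum_apply, Finset.sum_mul]
    exact Finset.sum_comm
  have key : ∀ f, Ideal.Quotient.mk (Ide K) (lam f) = R.ε f := by
    intro f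
    calc Ideal.Quotient.mk (Ide K) (lam f)
        = ∑ j, f j • R.ε (Pi.single j 1) := by
          rw [hlam, map_sum]
          refine Finset.sum_congr rfl fun j _ => ?_
          rw [← hp2 j, smul_mk]
      _ = R.ε (∑ j, f j • (Pi.single j 1 : Fin (R.b 0) → MvPolynomial (Fin 4) K)) := by
          rw [map_sum]; simp only [map_smul]
      _ = R.ε f := by rw [← pi_sum]
  obtain ⟨u, hu⟩ := R.surj 1
  have hw : lam u - 1 ∈ Ide K := by
    rw [← Ideal.Quotient.eq_zero_iff_mem, map_sub, key, hu, map_one, sub_self]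
  set m2 : MvPolynomial (Fin 4) K := X 0 * X 2 * X 3 with hm2'
  have hker : (m2 • u) ∈ LinearMap.ker R.ε := by
    rw [LinearMap.mem_ker, map_smul, hu, ← map_one (Ideal.Quotient.mk (Ide K)), smul_mk,
      mul_one, Ideal.Quotient.eq_zero_iff_mem]
    exact m2_mem
  rw [R.exact0] at hker
  obtain ⟨g, hg⟩ := hker
  have hcol : ∀ j : Fin (R.b 1), X 1 ∣ lam (R.φ 0 (Pi.single j 1)) := by
    intro j
    have hmem : lam (R.φ 0 (Pi.single j 1)) ∈ Ide K := by
      rw [← Ideal.Quotient.eq_zero_iff_mem, key, ← LinearMap.mem_ker, R.exact0]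
      exact ⟨Pi.single j 1, rfl⟩
    have hhom : (lam (R.φ 0 (Pi.single j 1))).IsHomogeneous (R.a 1 j) :=
      lam_hom hp1 (R.hdeg 0 (R.a 1 j) _ (isHomVec_single _ _))
    exact ylem hmem hhom (by have := hR 1 j; omega)
  have hdvd : X 1 ∣ m2 * lam u := by
    have h1 : m2 * lam u = lam (R.φ 0 g) := by rw [hg, lam_smul]
    rw [h1]
    have h2 : R.φ 0 g = ∑ j, g j • R.φ 0 (Pi.single j 1) := by
      conv_lhs => rw [pi_sum g]
      rw [map_sum]
      simp only [map_smul]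
    rw [h2, lam_sum]
    refine Finset.dvd_sum fun j _ => ?_
    rw [lam_smul]
    exact Dvd.dvd.mul_left (hcol j) _
  obtain ⟨h, hh⟩ := hdvd
  have hco : coeff E2 (m2 * lam u) = 1 := by
    have hmon := coeff_monomial_mul (0 : Fin 4 →₀ ℕ) E2 (1:K) (lam u)
    rw [add_zero] at hmon
    rw [hm2', hm2, hmon, one_mul,
      show lam u = (lam u - 1) + 1 by ring, coeff_add, coeff_zero_of_mem hw]
    simp
  rw [hh, coeff_X_mul'] at hco
  simp only [Finsupp.mem_support_iff, E2_apply, if_pos rfl, ne_eq, not_true_eq_false,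
    if_false] at hco
  exact zero_ne_one hco

lemma primeX (i : Fin 4) : Prime (X i : MvPolynomial (Fin 4) K) := by
  have h0 : Prime (X 0 : MvPolynomial (Fin 4) K) := by
    rw [← MulEquiv.prime_iff (finSuccEquiv K 3).toRingEquiv.toMulEquiv]
    simpa [finSuccEquiv_X_zero] using
      (Polynomial.prime_X : Prime (Polynomial.X (R := MvPolynomial (Fin 3) K)))
  have : (X i : MvPolynomial (Fin 4) K) = renameEquiv K (Equiv.swap (0 : Fin 4) i) (X 0) := by
    simp [Equiv.swap_apply_left]
  rw [this]
  exact (MulEquiv.prime_iff (renameEquiv K (Equiv.swap (0 : Fin 4) i)).toRingEquiv.toMulEquiv).mpr h0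

/-- substitution killing the variable `i` -/
noncomputable def theta (i : Fin 4) : MvPolynomial (Fin 4) K →ₐ[K] MvPolynomial (Fin 4) K :=
  aeval (Function.update X i 0)

lemma theta_X_same (i : Fin 4) : theta (K := K) i (X i) = 0 := by
  simp [theta]

lemma theta_X_ne {i j : Fin 4} (h : j ≠ i) : theta (K := K) i (X j) = X j := by
  simp [theta, Function.update_of_ne h]

lemma X_dvd_sub_theta (i : Fin 4) (f : MvPolynomial (Fin 4) K) :
    X i ∣ f - theta i f := by
  induction f using MvPolynomial.induction_on with
  | C a => simp [theta]
  | add p q hp hq =>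
      have : p + q - theta i (p + q) = (p - theta i p) + (q - theta i q) := by
        rw [map_add]; ring
      rw [this]; exact dvd_add hp hq
  | mul_X p j hp =>
      rw [map_mul]
      by_cases h : j = i
      · subst h
        rw [theta_X_same, mul_zero]
        rw [sub_zero]
        exact Dvd.dvd.mul_left (dvd_refl _) p
      · rw [theta_X_ne h]
        have : p * X j - theta i p * X j = (p - theta i p) * X j := by ring
        rw [this]
        exact Dvd.dvd.mul_right hp _

local notation "S" => MvPolynomial (Fin 4) K

noncomputable def L0 : (Fin 4 → S) →ₗ[S] (Fin 1 → S) :=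
  Matrix.toLin' !![X 0 * X 1, X 1 * X 2, X 1 * X 3, X 0 * X 2 * X 3]

noncomputable def L1 : (Fin 4 → S) →ₗ[S] (Fin 4 → S) :=
  Matrix.toLin' !![X 2, X 3, 0, X 2 * X 3;
                   -X 0, 0, X 3, 0;
                   0, -X 0, -X 2, 0;
                   0, 0, 0, -X 1]

noncomputable def L2 : (Fin 1 → S) →ₗ[S] (Fin 4 → S) :=
  Matrix.toLin' !![X 3; -X 2; X 0; (0:S)]

lemma L0_apply (f : Fin 4 → S) (k : Fin 1) :
    L0 f k = f 0 * (X 0 * X 1) + f 1 * (X 1 * X 2) + f 2 * (X 1 * X 3)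
      + f 3 * (X 0 * X 2 * X 3) := by
  have : k = 0 := Subsingleton.elim _ _
  subst this
  simp [L0, Matrix.toLin'_apply, Matrix.mulVec, dotProduct, Matrix.vecHead, Matrix.vecTail, Fin.sum_univ_four]
  ring

lemma L1_apply0 (f : Fin 4 → S) :
    L1 f 0 = f 0 * X 2 + f 1 * X 3 + f 3 * (X 2 * X 3) := by
  simp [L1, Matrix.toLin'_apply, Matrix.mulVec, dotProduct, Matrix.vecHead, Matrix.vecTail, Fin.sum_univ_four]; ring
lemma L1_apply1 (f : Fin 4 → S) :
    L1 f 1 = -(f 0 * X 0) + f 2 * X 3 := by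
  simp [L1, Matrix.toLin'_apply, Matrix.mulVec, dotProduct, Matrix.vecHead, Matrix.vecTail, Fin.sum_univ_four]; ring
lemma L1_apply2 (f : Fin 4 → S) :
    L1 f 2 = -(f 1 * X 0) - f 2 * X 2 := by
  simp [L1, Matrix.toLin'_apply, Matrix.mulVec, dotProduct, Matrix.vecHead, Matrix.vecTail, Fin.sum_univ_four]; ring
lemma L1_apply3 (f : Fin 4 → S) :
    L1 f 3 = -(f 3 * X 1) := by
  simp [L1, Matrix.toLin'_apply, Matrix.mulVec, dotProduct, Matrix.vecHead, Matrix.vecTail, Fin.sum_univ_four]; ring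
lemma L2_apply0 (f : Fin 1 → S) : L2 f 0 = f 0 * X 3 := by
  simp [L2, Matrix.toLin'_apply, Matrix.mulVec, dotProduct, Matrix.vecHead, Matrix.vecTail, Fin.sum_univ_one]; ring
lemma L2_apply1 (f : Fin 1 → S) : L2 f 1 = -(f 0 * X 2) := by
  simp [L2, Matrix.toLin'_apply, Matrix.mulVec, dotProduct, Matrix.vecHead, Matrix.vecTail, Fin.sum_univ_one]; ring
lemma L2_apply2 (f : Fin 1 → S) : L2 f 2 = f 0 * X 0 := by
  simp [L2, Matrix.toLin'_apply, Matrix.mulVec, dotProduct, Matrix.vecHead, Matrix.vecTail, Fin.sum_univ_one]; ring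
lemma L2_apply3 (f : Fin 1 → S) : L2 f 3 = 0 := by
  simp [L2, Matrix.toLin'_apply, Matrix.mulVec, dotProduct, Matrix.vecHead, Matrix.vecTail, Fin.sum_univ_one]

lemma ndvdX {i j : Fin 4} (h : j ≠ i) : ¬ (X i : S) ∣ X j := fun hd => h (X_dvd_X.mp hd).symm

lemma Xne (i : Fin 4) : (X i : S) ≠ 0 := X_ne_zero i

lemma syz0 : LinearMap.ker (L0 (K := K)) = LinearMap.range L1 := by
  apply le_antisymm
  · intro f hf
    have heq : f 0 * (X 0 * X 1) + f 1 * (X 1 * X 2) + f 2 * (X 1 * X 3)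
        + f 3 * (X 0 * X 2 * X 3) = 0 := by
      rw [← L0_apply f 0, LinearMap.mem_ker.mp hf]
      rfl
    -- X 1 divides f 3
    have hdvd3 : (X 1 : S) ∣ f 3 := by
      have h1 : (X 1 : S) ∣ f 3 * (X 0 * X 2 * X 3) :=
        ⟨-(f 0 * X 0) - f 1 * X 2 - f 2 * X 3, by linear_combination heq⟩
      rcases (primeX 1).dvd_mul.mp h1 with h | h
      · exact h
      · exfalso
        rcases (primeX 1).dvd_mul.mp h with h' | h'
        · rcases (primeX 1).dvd_mul.mp h' with h'' | h''
          · exact ndvdX (by decide) h''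
          · exact ndvdX (by decide) h''
        · exact ndvdX (by decide) h'
    obtain ⟨c, hc⟩ := hdvd3
    -- cancel X 1
    have heq2 : f 0 * X 0 + f 1 * X 2 + f 2 * X 3 + c * (X 0 * X 2 * X 3) = 0 := by
      have h2 : X 1 * (f 0 * X 0 + f 1 * X 2 + f 2 * X 3 + c * (X 0 * X 2 * X 3)) = 0 := by
        linear_combination heq - (X 0 * X 2 * X 3) * hc
      exact (mul_eq_zero.mp h2).resolve_left (Xne 1)
    -- kill the variable X 0
    have heq3 : theta 0 (f 1) * X 2 + theta 0 (f 2) * X 3 = 0 := by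
      have := congrArg (theta 0) heq2
      simp only [map_add, map_mul, theta_X_same, map_zero, mul_zero, zero_mul, add_zero,
        theta_X_ne (show (2:Fin 4) ≠ 0 by decide), theta_X_ne (show (3:Fin 4) ≠ 0 by decide)]
        at this
      linear_combination this
    have hdvds : (X 2 : S) ∣ theta 0 (f 2) := by
      have h1 : (X 2 : S) ∣ theta 0 (f 2) * X 3 := ⟨-(theta 0 (f 1)), by linear_combination heq3⟩
      rcases (primeX 2).dvd_mul.mp h1 with h | h
      · exact h
      · exact absurd h (ndvdX (by decide))
    obtain ⟨s, hs⟩ := hdvds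
    have hf1' : theta 0 (f 1) = -(s * X 3) := by
      have h2 : X 2 * (theta 0 (f 1) + s * X 3) = 0 := by
        linear_combination heq3 - X 3 * hs
      have := (mul_eq_zero.mp h2).resolve_left (Xne 2)
      linear_combination this
    obtain ⟨q1, hq1⟩ := X_dvd_sub_theta 0 (f 1)
    obtain ⟨q2, hq2⟩ := X_dvd_sub_theta 0 (f 2)
    have hf1 : f 1 = X 0 * q1 - s * X 3 := by linear_combination hq1 + hf1'
    have hf2 : f 2 = X 0 * q2 + X 2 * s := by linear_combination hq2 + hs
    have hf0 : f 0 = -(q1 * X 2) - q2 * X 3 - c * (X 2 * X 3) := by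
      have h2 : X 0 * (f 0 + q1 * X 2 + q2 * X 3 + c * (X 2 * X 3)) = 0 := by
        linear_combination heq2 - X 2 * hf1 - X 3 * hf2
      have := (mul_eq_zero.mp h2).resolve_left (Xne 0)
      linear_combination this
    refine ⟨![-q1, -q2, -s, -c], ?_⟩
    funext k
    fin_cases k
    · show L1 ![-q1, -q2, -s, -c] 0 = f 0
      rw [L1_apply0]
      simp only [Matrix.cons_val_zero, Matrix.cons_val_one, Matrix.head_cons,
        Matrix.cons_val_two, Matrix.tail_cons, Matrix.cons_val_three]
      linear_combination -hf0
    · show L1 ![-q1, -q2, -s, -c] 1 = f 1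
      rw [L1_apply1]
      simp only [Matrix.cons_val_zero, Matrix.cons_val_one, Matrix.head_cons,
        Matrix.cons_val_two, Matrix.tail_cons, Matrix.cons_val_three]
      linear_combination -hf1
    · show L1 ![-q1, -q2, -s, -c] 2 = f 2
      rw [L1_apply2]
      simp only [Matrix.cons_val_zero, Matrix.cons_val_one, Matrix.head_cons,
        Matrix.cons_val_two, Matrix.tail_cons, Matrix.cons_val_three]
      linear_combination -hf2
    · show L1 ![-q1, -q2, -s, -c] 3 = f 3
      rw [L1_apply3]
      simp only [Matrix.cons_val_three, Matrix.tail_cons, Matrix.head_cons]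
      linear_combination -hc
  · rintro f ⟨g, rfl⟩
    rw [LinearMap.mem_ker]
    funext k
    have : k = 0 := Subsingleton.elim _ _
    subst this
    rw [L0_apply, L1_apply0, L1_apply1, L1_apply2, L1_apply3]
    show _ = (0 : S)
    ring

lemma syz1 : LinearMap.ker (L1 (K := K)) = LinearMap.range L2 := by
  apply le_antisymm
  · intro f hf
    have h0 : f 0 * X 2 + f 1 * X 3 + f 3 * (X 2 * X 3) = 0 := by
      rw [← L1_apply0 f, LinearMap.mem_ker.mp hf]; rfl
    have h1 : -(f 0 * X 0) + f 2 * X 3 = 0 := by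
      rw [← L1_apply1 f, LinearMap.mem_ker.mp hf]; rfl
    have h2 : -(f 1 * X 0) - f 2 * X 2 = 0 := by
      rw [← L1_apply2 f, LinearMap.mem_ker.mp hf]; rfl
    have h3 : -(f 3 * X 1) = 0 := by
      rw [← L1_apply3 f, LinearMap.mem_ker.mp hf]; rfl
    have hf3 : f 3 = 0 := by
      have := mul_eq_zero.mp (neg_eq_zero.mp h3)
      exact this.resolve_right (Xne 1)
    have hdvd0 : (X 3 : S) ∣ f 0 := by
      have hd : (X 3 : S) ∣ f 0 * X 2 := ⟨-(f 1), by rw [hf3] at h0; linear_combination h0⟩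
      rcases (primeX 3).dvd_mul.mp hd with h | h
      · exact h
      · exact absurd h (ndvdX (by decide))
    obtain ⟨c, hc⟩ := hdvd0
    have hf1 : f 1 = -(c * X 2) := by
      have hz : X 3 * (f 1 + c * X 2) = 0 := by
        rw [hf3] at h0
        linear_combination h0 - X 2 * hc
      have := (mul_eq_zero.mp hz).resolve_left (Xne 3)
      linear_combination this
    have hf2 : f 2 = c * X 0 := by
      have hz : X 3 * (f 2 - c * X 0) = 0 := by
        linear_combination h1 + X 0 * hc
      have := (mul_eq_zero.mp hz).resolve_left (Xne 3)
      linear_combination this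
    refine ⟨![c], ?_⟩
    funext k
    fin_cases k
    · show L2 ![c] 0 = f 0
      rw [L2_apply0]
      simp only [Matrix.cons_val_zero]
      linear_combination -hc
    · show L2 ![c] 1 = f 1
      rw [L2_apply1]
      simp only [Matrix.cons_val_zero]
      linear_combination -hf1
    · show L2 ![c] 2 = f 2
      rw [L2_apply2]
      simp only [Matrix.cons_val_zero]
      linear_combination -hf2
    · show L2 ![c] 3 = f 3
      rw [L2_apply3, hf3]
  · rintro f ⟨g, rfl⟩
    rw [LinearMap.mem_ker]
    funext k
    fin_cases k
    · show L1 (L2 g) 0 = 0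
      rw [L1_apply0, L2_apply0, L2_apply1, L2_apply3]; ring
    · show L1 (L2 g) 1 = 0
      rw [L1_apply1, L2_apply0, L2_apply2]; ring
    · show L1 (L2 g) 2 = 0
      rw [L1_apply2, L2_apply1, L2_apply2]; ring
    · show L1 (L2 g) 3 = 0
      rw [L1_apply3, L2_apply3]; ring

lemma syz2 : LinearMap.ker (L2 (K := K)) =
    LinearMap.range (0 : ((Fin 0 → S) →ₗ[S] (Fin 1 → S))) := by
  apply le_antisymm
  · intro f hf
    have h0 : f 0 * X 3 = 0 := by
      rw [← L2_apply0 f, LinearMap.mem_ker.mp hf]; rfl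
    have : f 0 = 0 := (mul_eq_zero.mp h0).resolve_right (Xne 3)
    have hf0 : f = 0 := by
      funext k
      have : k = 0 := Subsingleton.elim _ _
      subst this
      assumption
    rw [hf0]
    exact ⟨0, map_zero _⟩
  · rintro f ⟨g, rfl⟩
    simp



section Pieces

lemma pieceIf {f m : S} {a c t : ℕ} (hca : c ≤ a)
    (hf : if a ≤ t then f.IsHomogeneous (t - a) else f = 0)
    (hm : m.IsHomogeneous (a - c)) :
    if c ≤ t then (f * m).IsHomogeneous (t - c) else f * m = 0 := by
  split
  · split at hf
    · have := hf.mul hm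
      rwa [show t - a + (a - c) = t - c by omega] at this
    · rw [hf, zero_mul]
      exact isHomogeneous_zero _ _ _
  · split at hf
    · omega
    · rw [hf, zero_mul]

lemma pieceZero {c t : ℕ} :
    if c ≤ t then (0 : S).IsHomogeneous (t - c) else (0 : S) = 0 := by
  split
  · exact isHomogeneous_zero _ _ _
  · rfl

lemma pieceAdd {p q : S} {c t : ℕ}
    (hp : if c ≤ t then p.IsHomogeneous (t - c) else p = 0)
    (hq : if c ≤ t then q.IsHomogeneous (t - c) else q = 0) :
    if c ≤ t then (p + q).IsHomogeneous (t - c) else p + q = 0 := by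
  split <;> split at hp <;> split at hq <;> try omega
  · exact hp.add hq
  · rw [hp, hq, add_zero]

lemma pieceNeg {p : S} {c t : ℕ}
    (hp : if c ≤ t then p.IsHomogeneous (t - c) else p = 0) :
    if c ≤ t then (-p).IsHomogeneous (t - c) else -p = 0 := by
  split <;> split at hp <;> try omega
  · exact hp.neg
  · rw [hp, neg_zero]

lemma pieceSub {p q : S} {c t : ℕ}
    (hp : if c ≤ t then p.IsHomogeneous (t - c) else p = 0)
    (hq : if c ≤ t then q.IsHomogeneous (t - c) else q = 0) :
    if c ≤ t then (p - q).IsHomogeneous (t - c) else p - q = 0 := by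
  rw [sub_eq_add_neg]
  exact pieceAdd hp (pieceNeg hq)

end Pieces

@[reducible] def bb : ℕ → ℕ
  | 0 => 1 | 1 => 4 | 2 => 4 | 3 => 1 | _ + 4 => 0

@[reducible] noncomputable def aa : (i : ℕ) → Fin (bb i) → ℕ
  | 0 => ![0] | 1 => ![2, 2, 2, 3] | 2 => ![3, 3, 3, 4] | 3 => ![4] | _ + 4 => ![]

@[reducible] noncomputable def φφ : (i : ℕ) → (Fin (bb (i + 1)) → S) →ₗ[S] (Fin (bb i) → S)
  | 0 => L0 | 1 => L1 | 2 => L2 | _ + 3 => 0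

@[reducible] noncomputable def eps : (Fin (bb 0) → S) →ₗ[S] (MvPolynomial (Fin 4) K ⧸ Ide K) :=
  (Ide K).mkQ.comp (LinearMap.proj 0)

lemma hdeg0_lemma (t : ℕ) (f : Fin (bb 0) → S) (hf : IsHomVec (aa 0) t f) :
    eps (K := K) f ∈ quotHom (Ide K) t := by
  have h0 := hf 0
  rw [show aa 0 0 = 0 from rfl, if_pos (Nat.zero_le t), Nat.sub_zero] at h0
  exact ⟨f 0, h0, rfl⟩

lemma hdeg_lemma0 (t : ℕ) (f : Fin (bb 1) → S) (hf : IsHomVec (aa 1) t f) :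
    IsHomVec (aa 0) t (φφ 0 f) := by
  have h0 := hf 0; have h1 := hf 1; have h2 := hf 2; have h3 := hf 3
  rw [show aa 1 0 = 2 from rfl] at h0
  rw [show aa 1 1 = 2 from rfl] at h1
  rw [show aa 1 2 = 2 from rfl] at h2
  rw [show aa 1 3 = 3 from rfl] at h3
  intro k
  fin_cases k
  show if (0:ℕ) ≤ t then (L0 f 0).IsHomogeneous (t - 0) else L0 f 0 = 0
  rw [L0_apply]
  refine pieceAdd (pieceAdd (pieceAdd ?_ ?_) ?_) ?_
  · exact pieceIf (by norm_num) h0 ((isHomogeneous_X _ 0).mul (isHomogeneous_X _ 1))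
  · exact pieceIf (by norm_num) h1 ((isHomogeneous_X _ 1).mul (isHomogeneous_X _ 2))
  · exact pieceIf (by norm_num) h2 ((isHomogeneous_X _ 1).mul (isHomogeneous_X _ 3))
  · exact pieceIf (by norm_num) h3
      (((isHomogeneous_X _ 0).mul (isHomogeneous_X _ 2)).mul (isHomogeneous_X _ 3))

lemma hdeg_lemma1 (t : ℕ) (f : Fin (bb 2) → S) (hf : IsHomVec (aa 2) t f) :
    IsHomVec (aa 1) t (φφ 1 f) := by
  have h0 := hf 0; have h1 := hf 1; have h2 := hf 2; have h3 := hf 3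
  rw [show aa 2 0 = 3 from rfl] at h0
  rw [show aa 2 1 = 3 from rfl] at h1
  rw [show aa 2 2 = 3 from rfl] at h2
  rw [show aa 2 3 = 4 from rfl] at h3
  intro k
  fin_cases k
  · show if (2:ℕ) ≤ t then (L1 f 0).IsHomogeneous (t - 2) else L1 f 0 = 0
    rw [L1_apply0]
    refine pieceAdd (pieceAdd ?_ ?_) ?_
    · exact pieceIf (by norm_num) h0 (isHomogeneous_X _ 2)
    · exact pieceIf (by norm_num) h1 (isHomogeneous_X _ 3)
    · exact pieceIf (by norm_num) h3 ((isHomogeneous_X _ 2).mul (isHomogeneous_X _ 3))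
  · show if (2:ℕ) ≤ t then (L1 f 1).IsHomogeneous (t - 2) else L1 f 1 = 0
    rw [L1_apply1]
    refine pieceAdd (pieceNeg ?_) ?_
    · exact pieceIf (by norm_num) h0 (isHomogeneous_X _ 0)
    · exact pieceIf (by norm_num) h2 (isHomogeneous_X _ 3)
  · show if (2:ℕ) ≤ t then (L1 f 2).IsHomogeneous (t - 2) else L1 f 2 = 0
    rw [L1_apply2]
    refine pieceSub (pieceNeg ?_) ?_
    · exact pieceIf (by norm_num) h1 (isHomogeneous_X _ 0)
    · exact pieceIf (by norm_num) h2 (isHomogeneous_X _ 2)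
  · show if (3:ℕ) ≤ t then (L1 f 3).IsHomogeneous (t - 3) else L1 f 3 = 0
    rw [L1_apply3]
    exact pieceNeg (pieceIf (by norm_num) h3 (isHomogeneous_X _ 1))

lemma hdeg_lemma2 (t : ℕ) (f : Fin (bb 3) → S) (hf : IsHomVec (aa 3) t f) :
    IsHomVec (aa 2) t (φφ 2 f) := by
  have h0 := hf 0
  rw [show aa 3 0 = 4 from rfl] at h0
  intro k
  fin_cases k
  · show if (3:ℕ) ≤ t then (L2 f 0).IsHomogeneous (t - 3) else L2 f 0 = 0
    rw [L2_apply0]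
    exact pieceIf (by norm_num) h0 (isHomogeneous_X _ 3)
  · show if (3:ℕ) ≤ t then (L2 f 1).IsHomogeneous (t - 3) else L2 f 1 = 0
    rw [L2_apply1]
    exact pieceNeg (pieceIf (by norm_num) h0 (isHomogeneous_X _ 2))
  · show if (3:ℕ) ≤ t then (L2 f 2).IsHomogeneous (t - 3) else L2 f 2 = 0
    rw [L2_apply2]
    exact pieceIf (by norm_num) h0 (isHomogeneous_X _ 0)
  · show if (4:ℕ) ≤ t then (L2 f 3).IsHomogeneous (t - 4) else L2 f 3 = 0
    rw [L2_apply3]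
    exact pieceZero

lemma hdeg_triv (n t : ℕ) (f : Fin (bb (n + 4)) → S) (hf : IsHomVec (aa (n + 4)) t f) :
    IsHomVec (aa (n + 3)) t (φφ (n + 3) f) := by
  intro j
  show if aa (n+3) j ≤ t then (0 : S).IsHomogeneous (t - aa (n+3) j) else (0:S) = 0
  exact pieceZero

lemma exact_triv (n : ℕ) :
    LinearMap.ker (φφ (K := K) (n + 3)) = LinearMap.range (φφ (n + 4)) := by
  haveI : IsEmpty (Fin (bb (n + 4))) := by exact Fin.isEmpty
  ext x
  rw [Subsingleton.elim x 0]
  simp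

lemma eps_exact0 : LinearMap.ker (eps (K := K)) = LinearMap.range (φφ 0) := by
  apply le_antisymm
  · intro f hf
    have hmem : f 0 ∈ Ide K := by
      rw [← Submodule.Quotient.mk_eq_zero]
      exact LinearMap.mem_ker.mp hf
    rw [Ide] at hmem
    obtain ⟨a, z1, hz1, he1⟩ := Ideal.mem_span_insert.mp hmem
    obtain ⟨b, z2, hz2, he2⟩ := Ideal.mem_span_insert.mp hz1
    obtain ⟨c, z3, hz3, he3⟩ := Ideal.mem_span_insert.mp hz2
    obtain ⟨d, hd⟩ := Ideal.mem_span_singleton.mp hz3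
    refine ⟨![a, c, d, b], ?_⟩
    funext k
    have hk : k = 0 := Subsingleton.elim _ _
    subst hk
    show L0 ![a, c, d, b] 0 = f 0
    rw [L0_apply]
    simp only [Matrix.cons_val_zero, Matrix.cons_val_one, Matrix.head_cons,
      Matrix.cons_val_two, Matrix.tail_cons, Matrix.cons_val_three]
    rw [he1, he2, he3, hd]
    ring
  · rintro f ⟨g, rfl⟩
    rw [LinearMap.mem_ker]
    show Submodule.Quotient.mk (L0 g 0) = 0
    rw [Submodule.Quotient.mk_eq_zero, L0_apply]
    refine Ideal.add_mem _ (Ideal.add_mem _ (Ideal.add_mem _ ?_ ?_) ?_) ?_ <;>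
      exact Ideal.mul_mem_left _ _ (Ideal.subset_span (by simp))

lemma eps_surj : Function.Surjective (eps (K := K)) := by
  intro q
  obtain ⟨x, hx⟩ := Ideal.Quotient.mk_surjective q
  exact ⟨fun _ => x, hx⟩

noncomputable def Res : GradedFreeRes K (Fin 4) (MvPolynomial (Fin 4) K ⧸ Ide K)
    (fun t => (quotHom (Ide K) t : Set _)) where
  b := bb
  a := aa
  φ := φφ
  ε := eps
  surj := eps_surj
  exact0 := eps_exact0
  exact := fun i => match i with
    | 0 => syz0
    | 1 => syz1
    | 2 => syz2
    | n + 3 => exact_triv n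
  hdeg := fun i => match i with
    | 0 => hdeg_lemma0
    | 1 => hdeg_lemma1
    | 2 => hdeg_lemma2
    | n + 3 => hdeg_triv n
  hdeg0 := hdeg0_lemma

lemma Res_bound : ∀ i j, (Res (K := K)).a i j ≤ i + 2 := by
  intro i j
  match i, j with
  | 0, j => fin_cases j <;> exact (by decide : (0:ℕ) ≤ 2)
  | 1, j => fin_cases j <;>
      first
        | exact (by decide : (2:ℕ) ≤ 3)
        | exact (by decide : (3:ℕ) ≤ 3)
  | 2, j => fin_cases j <;>
      first
        | exact (by decide : (3:ℕ) ≤ 4)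
        | exact (by decide : (4:ℕ) ≤ 4)
  | 3, j => fin_cases j <;> exact (by decide : (4:ℕ) ≤ 5)
  | n + 4, j => exact j.elim0

lemma quotReg_eq : quotReg (Ide K) = 2 := by
  have hmem : (2 : ℕ) ∈ {r | ∃ R : GradedFreeRes K (Fin 4) (MvPolynomial (Fin 4) K ⧸ Ide K)
      (fun t => (quotHom (Ide K) t : Set _)), ∀ i j, R.a i j ≤ i + r} := ⟨Res, Res_bound⟩
  refine le_antisymm (Nat.sInf_le hmem) (le_csInf ⟨2, hmem⟩ ?_)
  intro m hm
  by_contra hlt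
  push_neg at hlt
  obtain ⟨R, hR⟩ := hm
  exact lower_bound (show m ≤ 1 by omega) R hR


/-! ### Hilbert function -/

def Std (d : Fin 4 →₀ ℕ) : Prop := ¬E1 ≤ d ∧ ¬E2 ≤ d ∧ ¬E3 ≤ d ∧ ¬E4 ≤ d

@[simp] lemma E1v0 : E1 0 = 1 := by rw [E1_apply]; decide
@[simp] lemma E1v1 : E1 1 = 1 := by rw [E1_apply]; decide
@[simp] lemma E1v2 : E1 2 = 0 := by rw [E1_apply]; decide
@[simp] lemma E1v3 : E1 3 = 0 := by rw [E1_apply]; decide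
@[simp] lemma E2v0 : E2 0 = 1 := by rw [E2_apply]; decide
@[simp] lemma E2v1 : E2 1 = 0 := by rw [E2_apply]; decide
@[simp] lemma E2v2 : E2 2 = 1 := by rw [E2_apply]; decide
@[simp] lemma E2v3 : E2 3 = 1 := by rw [E2_apply]; decide
@[simp] lemma E3v0 : E3 0 = 0 := by rw [E3_apply]; decide
@[simp] lemma E3v1 : E3 1 = 1 := by rw [E3_apply]; decide
@[simp] lemma E3v2 : E3 2 = 1 := by rw [E3_apply]; decide
@[simp] lemma E3v3 : E3 3 = 0 := by rw [E3_apply]; decide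
@[simp] lemma E4v0 : E4 0 = 0 := by rw [E4_apply]; decide
@[simp] lemma E4v1 : E4 1 = 1 := by rw [E4_apply]; decide
@[simp] lemma E4v2 : E4 2 = 0 := by rw [E4_apply]; decide
@[simp] lemma E4v3 : E4 3 = 1 := by rw [E4_apply]; decide

lemma std_iff {d : Fin 4 →₀ ℕ} : Std d ↔
    (d 0 = 0 ∨ d 1 = 0) ∧ (d 0 = 0 ∨ d 2 = 0 ∨ d 3 = 0) ∧ (d 1 = 0 ∨ d 2 = 0) ∧
      (d 1 = 0 ∨ d 3 = 0) := by
  rw [Std, le_iff4, le_iff4, le_iff4, le_iff4, E1v0, E1v1, E1v2, E1v3, E2v0, E2v1, E2v2, E2v3,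
    E3v0, E3v1, E3v2, E3v3, E4v0, E4v1, E4v2, E4v3]
  omega

lemma indep_lemma {ι : Type} [Fintype ι] (dv : ι → (Fin 4 →₀ ℕ))
    (hinj : Function.Injective dv) (hstd : ∀ j, Std (dv j)) :
    LinearIndependent K (fun j =>
      (Ideal.Quotient.mkₐ K (Ide K)).toLinearMap (monomial (dv j) (1:K))) := by
  rw [Fintype.linearIndependent_iff]
  intro g hg j
  have hF : (∑ i, g i • monomial (dv i) (1:K)) ∈ Ide K := by
    have h2 : (Ideal.Quotient.mkₐ K (Ide K)).toLinearMap
        (∑ i, g i • monomial (dv i) (1:K)) = 0 := by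
      rw [map_sum]
      simp only [map_smul]
      exact hg
    simpa only [AlgHom.toLinearMap_apply, Ideal.Quotient.mkₐ_eq_mk,
      Ideal.Quotient.eq_zero_iff_mem] using h2
  by_contra hgj
  have hco : coeff (dv j) (∑ i, g i • monomial (dv i) (1:K)) = g j := by
    rw [coeff_sum]
    rw [Finset.sum_eq_single j]
    · rw [coeff_smul, coeff_monomial, if_pos rfl, smul_eq_mul, mul_one]
    · intro i _ hij
      rw [coeff_smul, coeff_monomial, if_neg (fun hc => hij (hinj hc)), smul_eq_mul, mul_zero]
    · intro hj
      exact absurd (Finset.mem_univ j) hj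
  have hsup : dv j ∈ (∑ i, g i • monomial (dv i) (1:K)).support := by
    rw [mem_support_iff, hco]
    exact hgj
  have := mem_I_iff.mp hF _ hsup
  rcases hstd j with ⟨s1, s2, s3, s4⟩
  tauto

lemma span_lemma {t : ℕ} {ι : Type} (dv : ι → (Fin 4 →₀ ℕ))
    (hdeg : ∀ j, (dv j).degree = t)
    (hclass : ∀ d : Fin 4 →₀ ℕ, d.degree = t → Std d → ∃ j, dv j = d) :
    ∀ x : MvPolynomial (Fin 4) K ⧸ Ide K, x ∈ quotHom (Ide K) t →
      x ∈ Submodule.span K (Set.range fun j =>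
        (Ideal.Quotient.mkₐ K (Ide K)).toLinearMap (monomial (dv j) (1:K))) := by
  rintro x ⟨p, hp, rfl⟩
  replace hp : p.IsHomogeneous t := hp
  rw [as_sum p, map_sum]
  apply Submodule.sum_mem
  intro d hd
  have hdd : d.degree = t := supp_deg hp hd
  by_cases hstd : Std d
  · obtain ⟨j, hj⟩ := hclass d hdd hstd
    have : monomial d (coeff d p) = coeff d p • monomial d (1:K) := by
      rw [smul_monomial, smul_eq_mul, mul_one]
    rw [this, map_smul]
    exact Submodule.smul_mem _ _ (Submodule.subset_span ⟨j, by simp only [hj]⟩)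
  · have hmem : monomial d (coeff d p) ∈ Ide K := by
      rw [mem_I_iff]
      intro d' hd'
      have hd'd : d' = d := Finset.mem_singleton.mp (support_monomial_subset hd')
      subst hd'd
      rw [Std] at hstd
      tauto
    have : (Ideal.Quotient.mkₐ K (Ide K)).toLinearMap (monomial d (coeff d p)) = 0 := by
      simpa only [AlgHom.toLinearMap_apply, Ideal.Quotient.mkₐ_eq_mk,
        Ideal.Quotient.eq_zero_iff_mem] using hmem
    rw [this]
    exact Submodule.zero_mem _


lemma finrank_quotHom {t : ℕ} {ι : Type} [Fintype ι] (dv : ι → (Fin 4 →₀ ℕ))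
    (hinj : Function.Injective dv) (hstd : ∀ j, Std (dv j)) (hdeg : ∀ j, (dv j).degree = t)
    (hclass : ∀ d : Fin 4 →₀ ℕ, d.degree = t → Std d → ∃ j, dv j = d) :
    Module.finrank K (quotHom (Ide K) t) = Fintype.card ι := by
  set N := quotHom (Ide K) t with hN
  have hmem : ∀ j, (Ideal.Quotient.mkₐ K (Ide K)).toLinearMap (monomial (dv j) (1:K)) ∈ N :=
    fun j => ⟨monomial (dv j) 1, isHomogeneous_monomial _ (hdeg j), rfl⟩
  set v : ι → N := fun j => ⟨_, hmem j⟩ with hv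
  have hcomp : (N.subtype ∘ v) = fun j =>
      (Ideal.Quotient.mkₐ K (Ide K)).toLinearMap (monomial (dv j) (1:K)) := rfl
  have hli : LinearIndependent K v :=
    LinearIndependent.of_comp N.subtype (by rw [hcomp]; exact indep_lemma dv hinj hstd)
  have hsp : ⊤ ≤ Submodule.span K (Set.range v) := by
    have hmap : Submodule.map N.subtype (Submodule.span K (Set.range v)) =
        Submodule.map N.subtype ⊤ := by
      rw [Submodule.map_span, Submodule.map_top, Submodule.range_subtype, ← Set.range_comp, hcomp]
      apply le_antisymm
      · rw [Submodule.span_le]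
        rintro _ ⟨j, rfl⟩
        exact hmem j
      · intro x hx
        exact span_lemma dv hdeg hclass x hx
    exact (Submodule.map_injective_of_injective N.injective_subtype hmap).ge
  rw [Module.finrank_eq_card_basis (Module.Basis.mk hli hsp)]

lemma finrank0 : Module.finrank K (quotHom (Ide K) 0) = 1 := by
  rw [finrank_quotHom (ι := Unit) (fun _ => 0) (fun a b _ => rfl)
    (fun _ => by rw [std_iff]; simp)
    (fun _ => map_zero _)
    (fun d hd _ => ⟨(), ((Finsupp.degree_eq_zero_iff d).mp hd).symm⟩)]
  exact Fintype.card_unit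

noncomputable def dvec (n : ℕ) : Unit ⊕ Fin (n+2) ⊕ Fin (n+1) ⊕ Fin n → (Fin 4 →₀ ℕ)
  | .inl _ => Finsupp.single 1 (n+1)
  | .inr (.inl b) => Finsupp.single 2 b.1 + Finsupp.single 3 (n+1-b.1)
  | .inr (.inr (.inl a)) => Finsupp.single 0 (a.1+1) + Finsupp.single 3 (n-a.1)
  | .inr (.inr (.inr c)) => Finsupp.single 0 (n+1-(c.1+1)) + Finsupp.single 2 (c.1+1)

lemma dvec_deg (n : ℕ) (j) : (dvec n j).degree = n + 1 := by
  rcases j with _ | b | a | c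
  · have hb := Nat.zero_le 1
    rw [degE]
    simp [dvec, Finsupp.single_apply]
  · have hb := b.isLt
    rw [degE]
    simp [dvec, Finsupp.single_apply]
    omega
  · have ha := a.isLt
    rw [degE]
    simp [dvec, Finsupp.single_apply]
    omega
  · have hc := c.isLt
    rw [degE]
    simp [dvec, Finsupp.single_apply]
    omega

lemma dvec_std (n : ℕ) (j) : Std (dvec n j) := by
  rcases j with _ | b | a | c <;>
    · rw [std_iff]
      simp [dvec, Finsupp.single_apply]

lemma dvec_inj (n : ℕ) : Function.Injective (dvec n) := by
  intro j1 j2 h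
  rcases j1 with _ | b1 | a1 | c1 <;> rcases j2 with _ | b2 | a2 | c2
  · rfl
  · have e1 := DFunLike.congr_fun h 1
    simp [dvec, Finsupp.single_apply] at e1
  · have e1 := DFunLike.congr_fun h 1
    simp [dvec, Finsupp.single_apply] at e1
  · have e1 := DFunLike.congr_fun h 1
    simp [dvec, Finsupp.single_apply] at e1
  · have e1 := DFunLike.congr_fun h 1
    simp [dvec, Finsupp.single_apply] at e1
  · have e2 := DFunLike.congr_fun h 2
    simp [dvec, Finsupp.single_apply] at e2
    have : b1 = b2 := Fin.ext e2
    rw [this]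
  · have e0 := DFunLike.congr_fun h 0
    simp [dvec, Finsupp.single_apply] at e0
  · have e0 := DFunLike.congr_fun h 0
    simp [dvec, Finsupp.single_apply] at e0
    have := c2.isLt
    exfalso
    omega
  · have e1 := DFunLike.congr_fun h 1
    simp [dvec, Finsupp.single_apply] at e1
  · have e0 := DFunLike.congr_fun h 0
    simp [dvec, Finsupp.single_apply] at e0
  · have e0 := DFunLike.congr_fun h 0
    simp [dvec, Finsupp.single_apply] at e0
    have : a1 = a2 := Fin.ext (by omega)
    rw [this]
  · have e2 := DFunLike.congr_fun h 2
    simp [dvec, Finsupp.single_apply] at e2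
  · have e1 := DFunLike.congr_fun h 1
    simp [dvec, Finsupp.single_apply] at e1
  · have e0 := DFunLike.congr_fun h 0
    simp [dvec, Finsupp.single_apply] at e0
    have := c1.isLt
    exfalso
    omega
  · have e2 := DFunLike.congr_fun h 2
    simp [dvec, Finsupp.single_apply] at e2
  · have e2 := DFunLike.congr_fun h 2
    simp [dvec, Finsupp.single_apply] at e2
    have : c1 = c2 := Fin.ext (by omega)
    rw [this]

lemma dvec_class (n : ℕ) : ∀ d : Fin 4 →₀ ℕ, d.degree = n+1 → Std d → ∃ j, dvec n j = d := by
  intro d hdeg hstd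
  rw [std_iff] at hstd
  rw [degE] at hdeg
  obtain ⟨s1, s2, s3, s4⟩ := hstd
  by_cases h1 : d 1 = 0
  · by_cases h0 : d 0 = 0
    · refine ⟨Sum.inr (Sum.inl ⟨d 2, by omega⟩), ?_⟩
      ext i
      fin_cases i <;> simp [dvec, Finsupp.single_apply] <;> omega
    · by_cases h2 : d 2 = 0
      · refine ⟨Sum.inr (Sum.inr (Sum.inl ⟨d 0 - 1, by omega⟩)), ?_⟩
        ext i
        fin_cases i <;> simp [dvec, Finsupp.single_apply] <;> omega
      · have h3 : d 3 = 0 := by tauto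
        refine ⟨Sum.inr (Sum.inr (Sum.inr ⟨d 2 - 1, by omega⟩)), ?_⟩
        ext i
        fin_cases i <;> simp [dvec, Finsupp.single_apply] <;> omega
  · have h0 : d 0 = 0 := by tauto
    have h2 : d 2 = 0 := by tauto
    have h3 : d 3 = 0 := by tauto
    refine ⟨Sum.inl (), ?_⟩
    ext i
    fin_cases i <;> simp [dvec, Finsupp.single_apply] <;> omega

lemma finrankS (n : ℕ) : Module.finrank K (quotHom (Ide K) (n+1)) = 3*n+4 := by
  rw [finrank_quotHom (dvec n) (dvec_inj n) (dvec_std n) (dvec_deg n) (dvec_class n)]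
  simp [Fintype.card_sum]
  omega

lemma hilb_coeff (t : ℕ) : (PowerSeries.coeff t) (hilbSeries (Ide K)) = 3 * t + 1 := by
  rw [hilbSeries, PowerSeries.coeff_mk]
  cases t with
  | zero => rw [finrank0]; norm_num
  | succ n =>
      rw [finrankS n]
      push_cast
      ring

lemma hilb_eq : hilbSeries (Ide K) * (1 - PowerSeries.X)^2
    = (1 + 2 * PowerSeries.X : PowerSeries ℤ) := by
  have hexp : hilbSeries (Ide K) * (1 - PowerSeries.X)^2
      = hilbSeries (Ide K) - (hilbSeries (Ide K) * PowerSeries.X)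
        - (hilbSeries (Ide K) * PowerSeries.X)
        + (hilbSeries (Ide K) * PowerSeries.X) * PowerSeries.X := by ring
  have h2 : (1 + 2 * PowerSeries.X : PowerSeries ℤ)
      = 1 + (PowerSeries.X + PowerSeries.X) := by ring
  rw [hexp, h2]
  ext n
  simp only [map_add, map_sub]
  rcases n with _ | n
  · rw [PowerSeries.coeff_zero_mul_X, PowerSeries.coeff_zero_mul_X, hilb_coeff 0]
    simp [PowerSeries.coeff_one, PowerSeries.coeff_X]
  · rcases n with _ | m
    · rw [PowerSeries.coeff_succ_mul_X, PowerSeries.coeff_succ_mul_X,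
        PowerSeries.coeff_zero_mul_X, hilb_coeff, hilb_coeff]
      simp [PowerSeries.coeff_one, PowerSeries.coeff_X]
    · rw [PowerSeries.coeff_succ_mul_X, PowerSeries.coeff_succ_mul_X,
        PowerSeries.coeff_succ_mul_X, hilb_coeff, hilb_coeff, hilb_coeff]
      simp only [PowerSeries.coeff_one, PowerSeries.coeff_X, Nat.succ_ne_zero, if_false,
        Nat.add_eq_zero, and_false, false_and]
      norm_num
      push_cast
      ring

end Stmt14

/-- for `S₁ = K[x, y₁, z₁, z₂]` (with `x = X 0`, `y₁ = X 1`, `z₁ = X 2`,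
`z₂ = X 3`) and `I₁ = (xy₁, xz₁z₂, y₁z₁, y₁z₂)`, one has `reg(S₁/I₁) = 2` and
`H_{S₁/I₁}(λ) = (1+2λ)/(1-λ)²`. -/
theorem stmt14 (K : Type) [Field K] :
    let I : Ideal (MvPolynomial (Fin 4) K) := Ideal.span
      {X 0 * X 1, X 0 * X 2 * X 3, X 1 * X 2, X 1 * X 3}
    quotReg I = 2 ∧
    hilbSeries I * (1 - PowerSeries.X) ^ 2 =
      (1 + 2 * PowerSeries.X : PowerSeries ℤ) := by
  intro I
  exact ⟨Stmt14.quotReg_eq, Stmt14.hilb_eq⟩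
end
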